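/- arXiv:2103.01604 — 6 statements merged into one kernel-verified Lean document; each statement's English description precedes it below -/
import Mathlib

section
/- Let m ≥ 0 and let 0 = T_0 < T_1 < ⋯ < T_{m+1} = T be integers. Let μ_1, …, μ_{m+1} ∈ ℝ and define μ(t) = μ_j for T_{j−1} < t ≤ T_j, r_j = (T_j − T_{j−1})/T, and d* = (1/2) ∑_{j1 ≠ j2} r_{j1} r_{j2} (μ_{j2} − μ_{j1})² (sum over ordered pairs j1 ≠ j2 in {1, …, m+1}). Then for every integer k with 0 ≤ k < T, | (1/T) ∑_{t=k+1}^{T} μ(t) μ(t−k) − (∑_{j=1}^{m+1} r_j μ_j)² − d* | ≤ (2m+1) k (max_{1 ≤ j ≤ m+1} μ_j²) / T. Hence for each fixed k the mean component of the lag-k sample autocovariance converges to (∑_j r_j μ_j)² + d* as T → ∞, with d* independent of k. -/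
open Finset

lemma sum_Ioc_partition (Tb : ℕ → ℕ) (f : ℕ → ℝ) (n : ℕ)
    (hmono : ∀ j, j < n → Tb j ≤ Tb (j + 1)) :
    ∑ t ∈ Finset.Ioc (Tb 0) (Tb n), f t
      = ∑ j ∈ Finset.Icc 1 n, ∑ t ∈ Finset.Ioc (Tb (j - 1)) (Tb j), f t := by
  induction n with
  | zero => simp
  | succ n ih =>
    have h1 : Tb 0 ≤ Tb n := by
      clear ih
      induction n with
      | zero => exact le_rfl
      | succ n ih2 =>
        exact le_trans (ih2 (fun j hj => hmono j (by omega))) (hmono n (by omega))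
    have h2 : Tb n ≤ Tb (n + 1) := hmono n (by omega)
    have hI : Finset.Icc 1 (n + 1) = insert (n + 1) (Finset.Icc 1 n) := by
      ext x; simp [Finset.mem_Icc]; omega
    rw [hI, Finset.sum_insert (by simp), ← Finset.sum_Ioc_consecutive f h1 h2,
      ih (fun j hj => hmono j (by omega))]
    simp [add_comm]

lemma telesc (Tb : ℕ → ℕ) (n : ℕ) :
    ∑ j ∈ Finset.Icc 1 n, ((Tb j : ℝ) - (Tb (j - 1) : ℝ)) = (Tb n : ℝ) - (Tb 0 : ℝ) := by
  induction n with
  | zero => simp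
  | succ n ih =>
    have hI : Finset.Icc 1 (n + 1) = insert (n + 1) (Finset.Icc 1 n) := by
      ext x; simp [Finset.mem_Icc]; omega
    rw [hI, Finset.sum_insert (by simp), ih]
    simp

/-- With break dates `0 = Tb 0 < Tb 1 < ⋯ < Tb (m+1) = T`, regime means
`μ j` (j = 1, …, m+1), the piecewise-constant mean `μfun` (`μfun t = μ j` for
`Tb (j-1) < t ≤ Tb j`), relative lengths `r j = (Tb j - Tb (j-1)) / T`, and
`dstar = (1/2) ∑_{j1 ≠ j2} r j1 * r j2 * (μ j2 - μ j1)²`, for every `0 ≤ k < T` the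
mean component of the lag-`k` sample autocovariance satisfies
`|(1/T) ∑_{t=k+1}^{T} μfun t * μfun (t-k) - (∑ j r j μ j)² - dstar|
  ≤ (2m+1) k (max_j μ j ²) / T`. -/
theorem stmt_1 (m T : ℕ) (Tb : ℕ → ℕ) (μ μfun : ℕ → ℝ)
    (h0 : Tb 0 = 0) (hlast : Tb (m + 1) = T)
    (hmono : ∀ j, j ≤ m → Tb j < Tb (j + 1))
    (hμfun : ∀ j, 1 ≤ j → j ≤ m + 1 → ∀ t, Tb (j - 1) < t → t ≤ Tb j → μfun t = μ j)
    (r : ℕ → ℝ) (hr : ∀ j, 1 ≤ j → r j = ((Tb j : ℝ) - (Tb (j - 1) : ℝ)) / T)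
    (dstar : ℝ)
    (hd : dstar = (1 / 2) * ∑ j1 ∈ Finset.Icc 1 (m + 1), ∑ j2 ∈ Finset.Icc 1 (m + 1),
        if j1 ≠ j2 then r j1 * r j2 * (μ j2 - μ j1) ^ 2 else 0)
    (k : ℕ) (hk : k < T) :
    |(T : ℝ)⁻¹ * (∑ t ∈ Finset.Icc (k + 1) T, μfun t * μfun (t - k))
        - (∑ j ∈ Finset.Icc 1 (m + 1), r j * μ j) ^ 2 - dstar|
      ≤ (2 * (m : ℝ) + 1) * (k : ℝ) *
          ((Finset.Icc 1 (m + 1)).sup' (Finset.nonempty_Icc.mpr (by omega)) fun j => μ j ^ 2)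
          / (T : ℝ) := by
  classical
  have hT0 : 0 < T := by omega
  have hTR : (0 : ℝ) < T := by exact_mod_cast hT0
  -- existence of a regime for each 0 < t ≤ T
  have hreg : ∀ t, 0 < t → t ≤ T → ∃ j, 1 ≤ j ∧ j ≤ m + 1 ∧ Tb (j - 1) < t ∧ t ≤ Tb j := by
    have key : ∀ n, n ≤ m + 1 → ∀ t, 0 < t → t ≤ Tb n →
        ∃ j, 1 ≤ j ∧ j ≤ n ∧ Tb (j - 1) < t ∧ t ≤ Tb j := by
      intro n
      induction n with
      | zero => intro _ t ht hle; rw [h0] at hle; omega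
      | succ n ih =>
        intro hn t ht hle
        by_cases h : t ≤ Tb n
        · obtain ⟨j, h1, h2, h3, h4⟩ := ih (by omega) t ht h
          exact ⟨j, h1, by omega, h3, h4⟩
        · exact ⟨n + 1, by omega, le_rfl, by simpa using (by omega : Tb n < t), hle⟩
    intro t ht hle
    exact key (m + 1) le_rfl t ht (by rw [hlast]; exact hle)
  -- abbreviations
  set S := ∑ j ∈ Finset.Icc 1 (m + 1), r j * μ j with hS
  set Q := ∑ j ∈ Finset.Icc 1 (m + 1), r j * μ j ^ 2 with hQ
  -- sum of r is 1
  have hsum_r : ∑ j ∈ Finset.Icc 1 (m + 1), r j = 1 := by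
    have h1 : ∑ j ∈ Finset.Icc 1 (m + 1), r j
        = (∑ j ∈ Finset.Icc 1 (m + 1), ((Tb j : ℝ) - (Tb (j - 1) : ℝ))) / T := by
      rw [Finset.sum_div]
      exact Finset.sum_congr rfl fun j hj => hr j (Finset.mem_Icc.mp hj).1
    rw [h1, telesc, hlast, h0]
    push_cast
    rw [sub_zero, div_self hTR.ne']
  -- dstar = Q - S^2
  have hdQ : dstar = Q - S ^ 2 := by
    rw [hd]
    have h1 : ∀ j1 ∈ Finset.Icc 1 (m + 1), ∀ j2 ∈ Finset.Icc 1 (m + 1),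
        (if j1 ≠ j2 then r j1 * r j2 * (μ j2 - μ j1) ^ 2 else 0)
          = r j1 * r j2 * (μ j2 - μ j1) ^ 2 := by
      intro j1 _ j2 _
      by_cases h : j1 = j2
      · simp [h]
      · simp [h]
    rw [Finset.sum_congr rfl fun j1 hj1 => Finset.sum_congr rfl (h1 j1 hj1)]
    have inner : ∀ j1, ∑ j2 ∈ Finset.Icc 1 (m + 1), r j1 * r j2 * (μ j2 - μ j1) ^ 2
        = r j1 * Q + (r j1 * μ j1 ^ 2) * 1 - 2 * ((r j1 * μ j1) * S) := by
      intro j1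
      calc ∑ j2 ∈ Finset.Icc 1 (m + 1), r j1 * r j2 * (μ j2 - μ j1) ^ 2
          = ∑ j2 ∈ Finset.Icc 1 (m + 1),
              (r j1 * (r j2 * μ j2 ^ 2) + (r j1 * μ j1 ^ 2) * r j2
                - 2 * ((r j1 * μ j1) * (r j2 * μ j2))) :=
            Finset.sum_congr rfl fun j2 _ => by ring
        _ = r j1 * Q + (r j1 * μ j1 ^ 2) * (∑ j2 ∈ Finset.Icc 1 (m + 1), r j2)
              - 2 * ((r j1 * μ j1) * S) := by
            simp only [Finset.sum_sub_distrib, Finset.sum_add_distrib, ← Finset.mul_sum, hS, hQ]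
        _ = _ := by rw [hsum_r]
    rw [Finset.sum_congr rfl fun j1 _ => inner j1]
    simp only [Finset.sum_sub_distrib, Finset.sum_add_distrib, ← Finset.sum_mul,
      ← Finset.mul_sum, ← hS, ← hQ]
    rw [hsum_r]
    ring
  -- Q * T equals the sum of squares of μfun
  have hmono' : ∀ j, j < m + 1 → Tb j ≤ Tb (j + 1) := fun j hj => (hmono j (by omega)).le
  have hregsum : ∀ j ∈ Finset.Icc 1 (m + 1),
      ∑ t ∈ Finset.Ioc (Tb (j - 1)) (Tb j), μfun t ^ 2
        = ((Tb j : ℝ) - (Tb (j - 1) : ℝ)) * μ j ^ 2 := by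
    intro j hj
    obtain ⟨hj1, hj2⟩ := Finset.mem_Icc.mp hj
    have hle : Tb (j - 1) ≤ Tb j := by
      have := hmono (j - 1) (by omega)
      have hj' : j - 1 + 1 = j := by omega
      rw [hj'] at this; exact this.le
    rw [Finset.sum_congr rfl (fun t ht => by
      obtain ⟨ht1, ht2⟩ := Finset.mem_Ioc.mp ht
      rw [hμfun j hj1 hj2 t ht1 ht2]),
      Finset.sum_const, Nat.card_Ioc, nsmul_eq_mul]
    rw [Nat.cast_sub hle]
  have hQT : ∑ t ∈ Finset.Ioc 0 T, μfun t ^ 2 = Q * T := by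
    have hpart := sum_Ioc_partition Tb (fun t => μfun t ^ 2) (m + 1) hmono'
    rw [h0, hlast] at hpart
    rw [hpart, Finset.sum_congr rfl hregsum, hQ, Finset.sum_mul]
    refine Finset.sum_congr rfl fun j hj => ?_
    rw [hr j (Finset.mem_Icc.mp hj).1]
    field_simp
  -- reduce to abstract bound with M
  suffices hfinal : ∀ M : ℝ, 0 ≤ M → (∀ j, 1 ≤ j → j ≤ m + 1 → μ j ^ 2 ≤ M) →
      |(T : ℝ)⁻¹ * (∑ t ∈ Finset.Icc (k + 1) T, μfun t * μfun (t - k)) - S ^ 2 - dstar|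
        ≤ (2 * (m : ℝ) + 1) * (k : ℝ) * M / (T : ℝ) by
    refine hfinal _ ?_ ?_
    · exact le_trans (sq_nonneg (μ 1)) (Finset.le_sup' (fun j => μ j ^ 2) (Finset.mem_Icc.mpr ⟨le_rfl, Nat.le_add_left 1 m⟩))
    · exact fun j h1 h2 => Finset.le_sup' (fun j => μ j ^ 2) (Finset.mem_Icc.mpr ⟨h1, h2⟩)
  intro M hM0 hMj
  have hMt : ∀ t, 0 < t → t ≤ T → μfun t ^ 2 ≤ M := by
    intro t ht hle
    obtain ⟨j, h1, h2, h3, h4⟩ := hreg t ht hle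
    rw [hμfun j h1 h2 t h3 h4]; exact hMj j h1 h2
  have hMprod : ∀ s t, 0 < s → s ≤ T → 0 < t → t ≤ T → |μfun s * μfun t| ≤ M := by
    intro s t hs1 hs2 ht1 ht2
    have h1 := hMt s hs1 hs2
    have h2 := hMt t ht1 ht2
    rcases abs_cases (μfun s * μfun t) with ⟨he, _⟩ | ⟨he, _⟩ <;> rw [he] <;>
      nlinarith [sq_nonneg (μfun s - μfun t), sq_nonneg (μfun s + μfun t)]
  -- rewrite Icc as Ioc and split the square sum
  have hIoc : Finset.Icc (k + 1) T = Finset.Ioc k T := Finset.Icc_add_one_left_eq_Ioc k T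
  have hsplit : ∑ t ∈ Finset.Ioc 0 T, μfun t ^ 2
      = ∑ t ∈ Finset.Ioc 0 k, μfun t ^ 2 + ∑ t ∈ Finset.Ioc k T, μfun t ^ 2 :=
    (Finset.sum_Ioc_consecutive _ (Nat.zero_le k) hk.le).symm
  -- bad set bound
  set B := (Finset.Ioc k T).filter
      (fun t => ∃ j, 1 ≤ j ∧ j ≤ m ∧ t - k ≤ Tb j ∧ Tb j < t) with hB
  have hg0 : ∀ t ∈ Finset.Ioc k T, (μfun t * μfun (t - k) - μfun t ^ 2) ≠ 0 →
      (∃ j, 1 ≤ j ∧ j ≤ m ∧ t - k ≤ Tb j ∧ Tb j < t) := by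
    intro t ht hne
    by_contra hcon
    push_neg at hcon
    obtain ⟨ht1, ht2⟩ := Finset.mem_Ioc.mp ht
    obtain ⟨j, h1, h2, h3, h4⟩ := hreg t (by omega) ht2
    have h5 : Tb (j - 1) < t - k := by
      by_contra h5
      push_neg at h5
      have hj1 : 1 ≤ j - 1 := by
        by_contra hj0
        have hz : j - 1 = 0 := by omega
        rw [hz, h0] at h5
        omega
      have := hcon (j - 1) hj1 (by omega) h5
      omega
    have h6 : t - k ≤ Tb j := le_trans (Nat.sub_le t k) h4
    rw [hμfun j h1 h2 (t - k) h5 h6, hμfun j h1 h2 t h3 h4] at hne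
    exact hne (by ring)
  have hDsum : ∑ t ∈ Finset.Ioc k T, (μfun t * μfun (t - k) - μfun t ^ 2)
      = ∑ t ∈ B, (μfun t * μfun (t - k) - μfun t ^ 2) :=
    (Finset.sum_filter_of_ne hg0).symm
  have hBsub : B ⊆ (Finset.Icc 1 m).biUnion (fun j => Finset.Ioc (Tb j) (Tb j + k)) := by
    intro t ht
    obtain ⟨htI, j, h1, h2, h3, h4⟩ := Finset.mem_filter.mp ht
    exact Finset.mem_biUnion.mpr ⟨j, Finset.mem_Icc.mpr ⟨h1, h2⟩,
      Finset.mem_Ioc.mpr ⟨h4, by omega⟩⟩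
  have hBcard : B.card ≤ m * k := by
    calc B.card ≤ ((Finset.Icc 1 m).biUnion (fun j => Finset.Ioc (Tb j) (Tb j + k))).card :=
          Finset.card_le_card hBsub
      _ ≤ ∑ j ∈ Finset.Icc 1 m, (Finset.Ioc (Tb j) (Tb j + k)).card := Finset.card_biUnion_le
      _ = ∑ j ∈ Finset.Icc 1 m, k := by
          refine Finset.sum_congr rfl fun j _ => ?_
          rw [Nat.card_Ioc]; omega
      _ = m * k := by rw [Finset.sum_const, Nat.card_Icc, smul_eq_mul]; simp
  have hgb : ∀ t ∈ B, |μfun t * μfun (t - k) - μfun t ^ 2| ≤ 2 * M := by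
    intro t ht
    obtain ⟨ht1, ht2⟩ := Finset.mem_Ioc.mp (Finset.mem_filter.mp ht).1
    have h1 : |μfun t * μfun (t - k)| ≤ M :=
      hMprod t (t - k) (by omega) ht2 (by omega) (by omega)
    have h2 : |μfun t ^ 2| ≤ M := by
      rw [abs_of_nonneg (sq_nonneg _)]; exact hMt t (by omega) ht2
    calc |μfun t * μfun (t - k) - μfun t ^ 2|
        ≤ |μfun t * μfun (t - k)| + |μfun t ^ 2| := abs_sub _ _
      _ ≤ M + M := add_le_add h1 h2
      _ = 2 * M := by ring
  have hD1 : |∑ t ∈ Finset.Ioc k T, (μfun t * μfun (t - k) - μfun t ^ 2)|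
      ≤ 2 * (m : ℝ) * (k : ℝ) * M := by
    rw [hDsum]
    calc |∑ t ∈ B, (μfun t * μfun (t - k) - μfun t ^ 2)|
        ≤ ∑ t ∈ B, |μfun t * μfun (t - k) - μfun t ^ 2| := Finset.abs_sum_le_sum_abs _ _
      _ ≤ B.card • (2 * M) := Finset.sum_le_card_nsmul _ _ _ hgb
      _ = (B.card : ℝ) * (2 * M) := nsmul_eq_mul _ _
      _ ≤ ((m * k : ℕ) : ℝ) * (2 * M) := by
          exact mul_le_mul_of_nonneg_right (by exact_mod_cast hBcard) (by positivity)
      _ = 2 * (m : ℝ) * (k : ℝ) * M := by push_cast; ring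
  have hD2 : |∑ t ∈ Finset.Ioc 0 k, μfun t ^ 2| ≤ (k : ℝ) * M := by
    calc |∑ t ∈ Finset.Ioc 0 k, μfun t ^ 2|
        ≤ ∑ t ∈ Finset.Ioc 0 k, |μfun t ^ 2| := Finset.abs_sum_le_sum_abs _ _
      _ ≤ (Finset.Ioc 0 k).card • M := by
          refine Finset.sum_le_card_nsmul _ _ _ fun t ht => ?_
          obtain ⟨ht1, ht2⟩ := Finset.mem_Ioc.mp ht
          rw [abs_of_nonneg (sq_nonneg _)]
          exact hMt t ht1 (by omega)
      _ = (k : ℝ) * M := by rw [Nat.card_Ioc, nsmul_eq_mul]; simp [mul_comm]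
  -- assemble
  have hQ2 : Q = (T : ℝ)⁻¹ * ∑ t ∈ Finset.Ioc 0 T, μfun t ^ 2 := by
    rw [hQT]; field_simp
  have hinner : (T : ℝ)⁻¹ * (∑ t ∈ Finset.Icc (k + 1) T, μfun t * μfun (t - k))
      - S ^ 2 - dstar
      = (T : ℝ)⁻¹ * ((∑ t ∈ Finset.Ioc k T, (μfun t * μfun (t - k) - μfun t ^ 2))
          - ∑ t ∈ Finset.Ioc 0 k, μfun t ^ 2) := by
    rw [hdQ, hQ2, hIoc, hsplit, Finset.sum_sub_distrib]
    ring
  rw [hinner, abs_mul, abs_of_nonneg (inv_nonneg.mpr hTR.le)]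
  calc (T : ℝ)⁻¹ * |(∑ t ∈ Finset.Ioc k T, (μfun t * μfun (t - k) - μfun t ^ 2))
          - ∑ t ∈ Finset.Ioc 0 k, μfun t ^ 2|
      ≤ (T : ℝ)⁻¹ * (2 * (m : ℝ) * (k : ℝ) * M + (k : ℝ) * M) := by
        refine mul_le_mul_of_nonneg_left ?_ (inv_nonneg.mpr hTR.le)
        exact le_trans (abs_sub _ _) (add_le_add hD1 hD2)
    _ = (2 * (m : ℝ) + 1) * (k : ℝ) * M / (T : ℝ) := by
        field_simp
end

section
/- For every integer n ≥ 2 there exists a constant C > 0 (depending only on n) such that for every δ ∈ (0, π) and every integer T ≥ 2, ∫_{D^c} |Ψ_T^{(n)}(x_1, …, x_n)| dx_1 ⋯ dx_{n−1} ≤ C (log T)^{n−1} / (T sin(δ/2)), where D = {x ∈ Π^{n−1} : |x_j| ≤ δ for all j = 1, …, n−1}, D^c is its complement in Π^{n−1}, and x_n = −∑_{j=1}^{n−1} x_j. -/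
open Real Finset MeasureTheory

noncomputable def DK (T : ℕ) (y : ℝ) : ℝ :=
  ‖∑ t ∈ Finset.Icc 1 T, Complex.exp (Complex.I * t * y)‖

lemma DK_nonneg (T : ℕ) (y : ℝ) : 0 ≤ DK T y := norm_nonneg _

lemma DK_cont (T : ℕ) : Continuous (DK T) := by
  unfold DK
  exact continuous_norm.comp (continuous_finset_sum _ fun t _ =>
    Complex.continuous_exp.comp (by continuity))

lemma DK_even (T : ℕ) (y : ℝ) : DK T (-y) = DK T y := by
  unfold DK
  rw [← Complex.norm_conj]
  congr 1
  rw [map_sum]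
  refine Finset.sum_congr rfl fun t _ => ?_
  rw [← Complex.exp_conj]
  congr 1
  simp only [map_mul, Complex.conj_I, Complex.conj_natCast, Complex.conj_ofReal,
    Complex.ofReal_neg, map_neg]
  ring

lemma DK_periodic (T : ℕ) : Function.Periodic (DK T) (2 * π) := by
  intro y
  unfold DK
  congr 1
  refine Finset.sum_congr rfl fun t _ => ?_
  push_cast
  rw [mul_add, Complex.exp_add]
  have : Complex.exp (Complex.I * t * (2 * π)) = 1 := by
    rw [show Complex.I * (t:ℂ) * (2 * (π:ℂ)) = (t:ℤ) * (2 * π * Complex.I) by push_cast; ring]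
    exact Complex.exp_int_mul_two_pi_mul_I t
  rw [this, mul_one]

lemma DK_le (T : ℕ) (y : ℝ) : DK T y ≤ T := by
  unfold DK
  calc ‖∑ t ∈ Finset.Icc 1 T, Complex.exp (Complex.I * t * y)‖
      ≤ ∑ t ∈ Finset.Icc 1 T, ‖Complex.exp (Complex.I * t * y)‖ := by
        exact norm_sum_le _ _
    _ = ∑ t ∈ Finset.Icc 1 T, 1 := by
        refine Finset.sum_congr rfl fun t _ => ?_
        rw [show Complex.I * (t:ℂ) * (y:ℂ) = ((t * y : ℝ) : ℂ) * Complex.I by push_cast; ring]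
        exact Complex.norm_exp_ofReal_mul_I _
    _ = T := by simp

lemma abs_exp_sub_one (y : ℝ) :
    ‖Complex.exp (Complex.I * y) - 1‖ = 2 * |sin (y / 2)| := by
  have h1 : Complex.exp (Complex.I * y) - 1
      = ((Real.cos y - 1 : ℝ) : ℂ) + ((Real.sin y : ℝ) : ℂ) * Complex.I := by
    rw [mul_comm, Complex.exp_mul_I]
    push_cast; ring
  rw [h1, Complex.norm_def, Complex.normSq_add_mul_I]
  have h2 : (Real.cos y - 1) ^ 2 + Real.sin y ^ 2 = (2 * |sin (y / 2)|) ^ 2 := by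
    have hs := Real.sin_sq_add_cos_sq y
    have hh : Real.cos y = 1 - 2 * Real.sin (y / 2) ^ 2 := by
      have h2m := Real.cos_two_mul (y / 2)
      rw [show 2 * (y / 2) = y by ring] at h2m
      have h3 := Real.sin_sq_add_cos_sq (y / 2)
      nlinarith
    rw [mul_pow, sq_abs]
    nlinarith
  rw [h2]
  exact Real.sqrt_sq (by positivity)

lemma DK_le_inv_sin (T : ℕ) (y : ℝ) (hy : Real.sin (y / 2) ≠ 0) :
    DK T y ≤ 1 / |Real.sin (y / 2)| := by
  set r : ℂ := Complex.exp (Complex.I * y) with hr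
  have habs : ‖r - 1‖ = 2 * |sin (y / 2)| := abs_exp_sub_one y
  have hr1 : r ≠ 1 := by
    intro h
    rw [h] at habs
    simp at habs
    exact hy habs
  have hrabs : ‖r‖ = 1 := by
    rw [hr, show Complex.I * (y:ℂ) = (y:ℝ) * Complex.I by ring]
    exact Complex.norm_exp_ofReal_mul_I y
  have hsum : ∑ t ∈ Finset.Icc 1 T, Complex.exp (Complex.I * t * y)
      = r * ((r ^ T - 1) / (r - 1)) := by
    have : ∀ t : ℕ, Complex.exp (Complex.I * t * y) = r ^ t := by
      intro t
      rw [hr, ← Complex.exp_nat_mul]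
      congr 1; ring
    simp_rw [this]
    rw [← Finset.Ico_add_one_right_eq_Icc, Finset.sum_Ico_eq_sum_range,
      show T + 1 - 1 = T from rfl, ← geom_sum_eq hr1]
    rw [Finset.mul_sum]
    refine Finset.sum_congr rfl fun i _ => ?_
    rw [pow_add, pow_one, mul_comm]
  unfold DK
  rw [hsum, norm_mul, hrabs, one_mul, norm_div, habs]
  have h2 : ‖r ^ T - 1‖ ≤ 2 := by
    calc ‖r ^ T - 1‖ ≤ ‖r ^ T‖ + ‖(1:ℂ)‖ :=
          (norm_sub_le _ _).trans (by rw [norm_one])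
      _ ≤ 2 := by rw [norm_pow, hrabs, one_pow, norm_one]; norm_num
  have hpos : 0 < |sin (y / 2)| := abs_pos.mpr hy
  rw [div_le_div_iff₀ (by linarith) hpos]
  calc ‖r ^ T - 1‖ * |sin (y / 2)| ≤ 2 * |sin (y / 2)| := by
        exact mul_le_mul_of_nonneg_right h2 (abs_nonneg _)
    _ = 1 * (2 * |sin (y / 2)|) := by ring

lemma DK_intInt (T : ℕ) (a b : ℝ) : IntervalIntegrable (DK T) volume a b :=
  (DK_cont T).intervalIntegrable a b

lemma DK_le_pi_div (T : ℕ) (y : ℝ) (h0 : 0 < y) (hπ : y ≤ π) : DK T y ≤ π / y := by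
  have hs : 0 < Real.sin (y / 2) :=
    Real.sin_pos_of_pos_of_lt_pi (by linarith) (by linarith [Real.pi_pos])
  have h1 : DK T y ≤ 1 / |Real.sin (y / 2)| := DK_le_inv_sin T y (ne_of_gt hs)
  rw [abs_of_pos hs] at h1
  refine h1.trans ?_
  have h2 : y / π ≤ Real.sin (y / 2) := by
    have := Real.mul_le_sin (x := y / 2) (by linarith) (by linarith)
    calc y / π = 2 / π * (y / 2) := by field_simp
      _ ≤ Real.sin (y / 2) := this
  have hyπ : 0 < y / π := div_pos h0 Real.pi_pos
  calc 1 / Real.sin (y / 2) ≤ 1 / (y / π) := by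
        apply one_div_le_one_div_of_le hyπ h2
    _ = π / y := by field_simp
  
lemma tail_bound (T : ℕ) (hT : 2 ≤ T) :
    ∫ y in (1 / (T : ℝ))..π, DK T y ≤ π * Real.log (π * T) := by
  have hT0 : (0:ℝ) < T := by positivity
  have hc : (0:ℝ) < 1 / T := by positivity
  have hcπ : 1 / (T:ℝ) ≤ π := by
    have : 1 / (T:ℝ) ≤ 1 / 2 := by
      apply one_div_le_one_div_of_le <;> [norm_num; exact_mod_cast hT]
    linarith [Real.pi_gt_three]
  have step1 : ∫ y in (1 / (T : ℝ))..π, DK T y ≤ ∫ y in (1 / (T : ℝ))..π, π / y := by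
    apply intervalIntegral.integral_mono_on hcπ (DK_intInt T _ _)
    · apply ContinuousOn.intervalIntegrable_of_Icc hcπ
      apply ContinuousOn.div continuousOn_const continuousOn_id
      intro x hx; exact ne_of_gt (lt_of_lt_of_le hc hx.1)
    · intro x hx
      exact DK_le_pi_div T x (lt_of_lt_of_le hc hx.1) hx.2
  refine step1.trans ?_
  have : ∫ y in (1 / (T : ℝ))..π, π / y = π * ∫ y in (1 / (T : ℝ))..π, 1 / y := by
    rw [← intervalIntegral.integral_const_mul]
    congr 1; ext y; ring
  rw [this, integral_one_div]
  · rw [show π / (1 / (T:ℝ)) = π * T by field_simp]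
  · intro h
    rcases h with h
    have := Set.mem_uIcc.mp h
    rcases this with ⟨h1, h2⟩ | ⟨h1, h2⟩ <;> linarith [Real.pi_pos]

lemma lebesgue_interval (T : ℕ) (hT : 2 ≤ T) :
    ∫ y in (-π)..π, DK T y ≤ 2 + 2 * π * Real.log (π * T) := by
  have hT0 : (0:ℝ) < T := by positivity
  have hc : (0:ℝ) < 1 / T := by positivity
  have hcπ : 1 / (T:ℝ) ≤ π := by
    have : 1 / (T:ℝ) ≤ 1 / 2 := by
      apply one_div_le_one_div_of_le <;> [norm_num; exact_mod_cast hT]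
    linarith [Real.pi_gt_three]
  have split1 : ∫ y in (-π)..π, DK T y =
      (∫ y in (-π)..(-(1/(T:ℝ))), DK T y) + (∫ y in (-(1/(T:ℝ)))..(1/(T:ℝ)), DK T y)
        + ∫ y in (1/(T:ℝ))..π, DK T y := by
    rw [intervalIntegral.integral_add_adjacent_intervals (DK_intInt T _ _) (DK_intInt T _ _),
      intervalIntegral.integral_add_adjacent_intervals (DK_intInt T _ _) (DK_intInt T _ _)]
  have left : ∫ y in (-π)..(-(1/(T:ℝ))), DK T y = ∫ y in (1/(T:ℝ))..π, DK T y := by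
    rw [← intervalIntegral.integral_comp_neg (fun y => DK T y)]
    congr 1; ext y; exact DK_even T y
  have mid : ∫ y in (-(1/(T:ℝ)))..(1/(T:ℝ)), DK T y ≤ 2 := by
    calc ∫ y in (-(1/(T:ℝ)))..(1/(T:ℝ)), DK T y ≤ ∫ _ in (-(1/(T:ℝ)))..(1/(T:ℝ)), (T:ℝ) := by
          apply intervalIntegral.integral_mono_on (by linarith) (DK_intInt T _ _)
            intervalIntegrable_const
          intro x _; exact DK_le T x
      _ = 2 := by
          rw [intervalIntegral.integral_const]
          simp only [smul_eq_mul]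
          field_simp
          ring
  have tb := tail_bound T hT
  rw [split1, left]
  linarith

lemma lebesgue_shift (T : ℕ) (hT : 2 ≤ T) (s : ℝ) :
    ∫ y in Set.Ioc (-π) π, DK T (y + s) ≤ 100 * Real.log T := by
  have hππ : -π ≤ π := by linarith [Real.pi_pos]
  have h1 : ∫ y in Set.Ioc (-π) π, DK T (y + s) = ∫ y in (-π)..π, DK T (y + s) := by
    rw [intervalIntegral.integral_of_le hππ]
  rw [h1, intervalIntegral.integral_comp_add_right (fun y => DK T y) s]
  have h2 : ∫ y in (-π + s)..(π + s), DK T y = ∫ y in (-π)..π, DK T y := by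
    have hper := DK_periodic T
    have := hper.intervalIntegral_add_eq (-π + s) (-π)
    rw [show -π + s + 2 * π = π + s by ring, show -π + 2 * π = π by ring] at this
    exact this
  rw [h2]
  refine (lebesgue_interval T hT).trans ?_
  -- numeric
  have hT0 : (0:ℝ) < T := by positivity
  have hlogT : Real.log 2 ≤ Real.log T := by
    apply Real.log_le_log (by norm_num)
    exact_mod_cast hT
  have hlog2 : (0.6931471803 : ℝ) < Real.log 2 := Real.log_two_gt_d9
  have hπ15 : π < 3.15 := Real.pi_lt_d2
  have hπ3 : 3.14 < π := by linarith [Real.pi_gt_d6]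
  have hlogπ : Real.log π ≤ π - 1 := by
    have := Real.add_one_le_exp (Real.log π)
    nlinarith [Real.log_le_sub_one_of_pos Real.pi_pos]
  have hsplit : Real.log (π * T) = Real.log π + Real.log T :=
    Real.log_mul (ne_of_gt Real.pi_pos) (ne_of_gt hT0)
  rw [hsplit]
  nlinarith [Real.pi_pos]

lemma restrictPi (n : ℕ) :
    (volume : Measure (Fin n → ℝ)).restrict (Set.pi Set.univ fun _ => Set.Ioc (-π) π)
      = Measure.pi (fun _ : Fin n => volume.restrict (Set.Ioc (-π) π)) := by
  refine (Measure.pi_eq fun s hs => ?_).symm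
  rw [Measure.restrict_apply (MeasurableSet.univ_pi hs), ← Set.pi_inter_distrib,
    volume_pi, Measure.pi_pi]
  exact Finset.prod_congr rfl fun i _ => (Measure.restrict_apply (hs i)).symm

lemma pi_lintegral_prod (n : ℕ) (g : ℝ → ENNReal) (hg : Measurable g) (L : ENNReal)
    (hL : ∫⁻ y, g y ∂(volume.restrict (Set.Ioc (-π) π)) ≤ L) :
    ∫⁻ x, ∏ i, g (x i) ∂(Measure.pi fun _ : Fin n => volume.restrict (Set.Ioc (-π) π))
      ≤ L ^ n := by
  induction n with
  | zero =>
      simp only [Finset.univ_eq_empty, Finset.prod_empty, lintegral_const, pow_zero]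
      rw [Measure.pi_univ]
      simp
  | succ n ih =>
      set ν : Measure ℝ := volume.restrict (Set.Ioc (-π) π) with hν
      have e := measurePreserving_piFinSuccAbove (fun _ : Fin (n + 1) => ν) 0
      set E := MeasurableEquiv.piFinSuccAbove (fun _ : Fin (n + 1) => ℝ) 0 with hE
      have hG : Measurable (fun z : ℝ × (Fin n → ℝ) => g z.1 * ∏ i, g (z.2 i)) := by
        apply Measurable.mul (hg.comp measurable_fst)
        exact Finset.measurable_prod _ fun i _ =>
          hg.comp ((measurable_pi_apply i).comp measurable_snd)
      have key : ∫⁻ x, ∏ i, g (x i) ∂(Measure.pi fun _ : Fin (n + 1) => ν)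
          = ∫⁻ z, g z.1 * ∏ i, g (z.2 i) ∂(ν.prod (Measure.pi fun _ : Fin n => ν)) := by
        rw [← e.lintegral_comp hG]
        refine lintegral_congr fun x => ?_
        simp only [E, MeasurableEquiv.piFinSuccAbove_apply]
        rw [Fin.prod_univ_succAbove (fun i => g (x i)) 0]
        rfl
      rw [key]
      have h2 : Measurable (fun r : Fin n → ℝ => ∏ i, g (r i)) :=
        Finset.measurable_prod _ fun i _ => hg.comp (measurable_pi_apply i)
      calc ∫⁻ z, g z.1 * ∏ i, g (z.2 i) ∂(ν.prod (Measure.pi fun _ : Fin n => ν))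
          = (∫⁻ y, g y ∂ν) * ∫⁻ r, ∏ i, g (r i) ∂(Measure.pi fun _ : Fin n => ν) :=
            lintegral_prod_mul hg.aemeasurable h2.aemeasurable
        _ ≤ L * L ^ n := mul_le_mul' hL ih
        _ = L ^ (n + 1) := by ring

lemma lebesgue_shift_lintegral (T : ℕ) (hT : 2 ≤ T) (s : ℝ) :
    ∫⁻ y, ENNReal.ofReal (DK T (y + s)) ∂(volume.restrict (Set.Ioc (-π) π))
      ≤ ENNReal.ofReal (100 * Real.log T) := by
  have hcont : Continuous fun y => DK T (y + s) :=
    (DK_cont T).comp (continuous_id.add continuous_const)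
  rw [← ofReal_integral_eq_lintegral_ofReal (hcont.integrableOn_Ioc)
    (Filter.Eventually.of_forall fun y => DK_nonneg T _)]
  exact ENNReal.ofReal_le_ofReal (lebesgue_shift T hT s)

lemma lebesgue_lintegral (T : ℕ) (hT : 2 ≤ T) :
    ∫⁻ y, ENNReal.ofReal (DK T y) ∂(volume.restrict (Set.Ioc (-π) π))
      ≤ ENNReal.ofReal (100 * Real.log T) := by
  have := lebesgue_shift_lintegral T hT 0
  simpa using this

lemma main_G (n : ℕ) (j : Fin (n + 1)) (T : ℕ) (hT : 2 ≤ T) :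
    ∫⁻ x, (∏ i : Fin n, ENNReal.ofReal (DK T (x (j.succAbove i)))) *
        ENNReal.ofReal (DK T (∑ i, x i))
      ∂(Measure.pi fun _ : Fin (n + 1) => volume.restrict (Set.Ioc (-π) π))
      ≤ (ENNReal.ofReal (100 * Real.log T)) ^ (n + 1) := by
  set ν : Measure ℝ := volume.restrict (Set.Ioc (-π) π) with hν
  set g : ℝ → ENNReal := fun y => ENNReal.ofReal (DK T y) with hg
  have hgm : Measurable g := ENNReal.measurable_ofReal.comp (DK_cont T).measurable
  have e := measurePreserving_piFinSuccAbove (fun _ : Fin (n + 1) => ν) j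
  set E := MeasurableEquiv.piFinSuccAbove (fun _ : Fin (n + 1) => ℝ) j with hE
  set G : ℝ × (Fin n → ℝ) → ENNReal :=
    fun z => (∏ i, g (z.2 i)) * g (z.1 + ∑ i, z.2 i) with hG
  have hGm : Measurable G := by
    apply Measurable.mul
    · exact Finset.measurable_prod _ fun i _ =>
        hgm.comp ((measurable_pi_apply i).comp measurable_snd)
    · exact hgm.comp (measurable_fst.add
        (Finset.measurable_sum _ fun i _ => (measurable_pi_apply i).comp measurable_snd))
  have key : ∫⁻ x, (∏ i : Fin n, g (x (j.succAbove i))) * g (∑ i, x i)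
        ∂(Measure.pi fun _ : Fin (n + 1) => ν)
      = ∫⁻ z, G z ∂(ν.prod (Measure.pi fun _ : Fin n => ν)) := by
    rw [← e.lintegral_comp hGm]
    refine lintegral_congr fun x => ?_
    simp only [G, E, MeasurableEquiv.piFinSuccAbove_apply]
    congr 1
    congr 1
    exact Fin.sum_univ_succAbove (fun i => x i) j
  rw [key, lintegral_prod_symm' G hGm]
  have inner : ∀ r : Fin n → ℝ,
      ∫⁻ y, G (y, r) ∂ν ≤ (∏ i, g (r i)) * ENNReal.ofReal (100 * Real.log T) := by
    intro r
    simp only [G]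
    have hmeas : Measurable fun y : ℝ => g (y + ∑ i, r i) :=
      hgm.comp (measurable_add_const _)
    rw [lintegral_const_mul _ hmeas]
    exact mul_le_mul_right (lebesgue_shift_lintegral T hT _) _
  calc ∫⁻ r, ∫⁻ y, G (y, r) ∂ν ∂(Measure.pi fun _ : Fin n => ν)
      ≤ ∫⁻ r, (∏ i, g (r i)) * ENNReal.ofReal (100 * Real.log T)
          ∂(Measure.pi fun _ : Fin n => ν) := lintegral_mono inner
    _ = (∫⁻ r, ∏ i, g (r i) ∂(Measure.pi fun _ : Fin n => ν))
          * ENNReal.ofReal (100 * Real.log T) := by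
        rw [lintegral_mul_const]
        exact Finset.measurable_prod _ fun i _ => hgm.comp (measurable_pi_apply i)
    _ ≤ (ENNReal.ofReal (100 * Real.log T)) ^ n * ENNReal.ofReal (100 * Real.log T) := by
        exact mul_le_mul_left (pi_lintegral_prod n g hgm _ (lebesgue_lintegral T hT)) _
    _ = (ENNReal.ofReal (100 * Real.log T)) ^ (n + 1) := by ring

lemma DK_le_inv_sin_delta (T : ℕ) {δ y : ℝ} (hδ : 0 < δ) (hδπ : δ < π)
    (hy : δ < |y|) (hyπ : |y| ≤ π) : DK T y ≤ (Real.sin (δ / 2))⁻¹ := by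
  have heven : DK T y = DK T |y| := by
    rcases abs_cases y with ⟨h, _⟩ | ⟨h, _⟩
    · rw [h]
    · rw [h, DK_even]
  have hyp : 0 < |y| := lt_trans hδ hy
  have hs : 0 < Real.sin (|y| / 2) :=
    Real.sin_pos_of_pos_of_lt_pi (by linarith) (by linarith [Real.pi_pos])
  have hsδ : 0 < Real.sin (δ / 2) :=
    Real.sin_pos_of_pos_of_lt_pi (by linarith) (by linarith [Real.pi_pos])
  have hmono : Real.sin (δ / 2) ≤ Real.sin (|y| / 2) := by
    apply Real.strictMonoOn_sin.monotoneOn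
    · constructor <;> [linarith [Real.pi_pos]; linarith]
    · constructor <;> [linarith [Real.pi_pos]; linarith]
    · linarith
  calc DK T y = DK T |y| := heven
    _ ≤ 1 / |Real.sin (|y| / 2)| := DK_le_inv_sin T _ (ne_of_gt hs)
    _ = 1 / Real.sin (|y| / 2) := by rw [abs_of_pos hs]
    _ ≤ 1 / Real.sin (δ / 2) := one_div_le_one_div_of_le hsδ hmono
    _ = (Real.sin (δ / 2))⁻¹ := one_div _

lemma integrand_eq (m T : ℕ) (x : Fin m → ℝ) :
    ‖((((2 * π) ^ m * (T : ℝ) : ℝ) : ℂ)⁻¹ *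
      ∑ t ∈ Fintype.piFinset (fun _ : Fin (m + 1) => Finset.Icc 1 T),
        Complex.exp (Complex.I *
          ∑ j : Fin (m + 1),
            (t j : ℂ) * (((Fin.snoc x (-∑ i, x i) : Fin (m + 1) → ℝ) j : ℝ) : ℂ)))‖
    = ((2 * π) ^ m * T)⁻¹ * ((∏ i : Fin m, DK T (x i)) * DK T (∑ i, x i)) := by
  set z : Fin (m + 1) → ℝ := Fin.snoc x (-∑ i, x i) with hz
  have h1 : ∑ t ∈ Fintype.piFinset (fun _ : Fin (m + 1) => Finset.Icc 1 T),
      Complex.exp (Complex.I * ∑ j, (t j : ℂ) * (z j : ℂ))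
      = ∏ j : Fin (m + 1), ∑ t ∈ Finset.Icc 1 T, Complex.exp (Complex.I * t * (z j)) := by
    rw [Finset.prod_univ_sum]
    refine Finset.sum_congr rfl fun t _ => ?_
    rw [Finset.mul_sum, Complex.exp_sum]
    refine Finset.prod_congr rfl fun j _ => ?_
    congr 1; ring
  rw [norm_mul, h1, norm_prod, norm_inv, Complex.norm_real, Real.norm_eq_abs,
    abs_of_nonneg (by positivity : (0:ℝ) ≤ (2 * π) ^ m * T)]
  congr 1
  have h2 : ∀ j, ‖∑ t ∈ Finset.Icc 1 T, Complex.exp (Complex.I * t * (z j))‖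
      = DK T (z j) := fun j => rfl
  rw [Finset.prod_congr rfl fun j _ => h2 j, Fin.prod_univ_castSucc]
  congr 1
  · exact Finset.prod_congr rfl fun i _ => by rw [hz, Fin.snoc_castSucc]
  · rw [hz, Fin.snoc_last, DK_even]


/-- For `n = m + 1 ≥ 2` there is `C > 0` (depending only on `n`) such that
for every `δ ∈ (0, π)` and every `T ≥ 2`, the integral of the absolute multiple Fejér
kernel `|Ψ_T^{(n)}|` (with `x_n = -∑_{j<n} x_j`) over the complement in `Π^{n-1}` of
`D = {x : |x_j| ≤ δ for all j}` is at most `C (log T)^{n-1} / (T sin(δ/2))`. -/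
theorem stmt_5 (m : ℕ) (hm : 1 ≤ m) :
    ∃ C > 0, ∀ δ : ℝ, 0 < δ → δ < π → ∀ T : ℕ, 2 ≤ T →
      (∫ x in (Set.pi Set.univ (fun _ : Fin m => Set.Ioc (-π) π)) \
            {x : Fin m → ℝ | ∀ j, |x j| ≤ δ},
          ‖((((2 * π) ^ m * (T : ℝ) : ℝ) : ℂ)⁻¹ *
            ∑ t ∈ Fintype.piFinset (fun _ : Fin (m + 1) => Finset.Icc 1 T),
              Complex.exp (Complex.I *
                ∑ j : Fin (m + 1),
                  (t j : ℂ) * (((Fin.snoc x (-∑ i, x i) : Fin (m + 1) → ℝ) j : ℝ) : ℂ)))‖)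
        ≤ C * (Real.log T) ^ m / ((T : ℝ) * Real.sin (δ / 2)) := by
  obtain ⟨k, rfl⟩ : ∃ k, m = k + 1 := ⟨m - 1, (Nat.succ_pred_eq_of_pos hm).symm⟩
  refine ⟨(k + 1 : ℝ) * 100 ^ (k + 1) / (2 * π) ^ (k + 1), by positivity, ?_⟩
  intro δ hδ0 hδπ T hT
  have hT0 : (0:ℝ) < T := by
    have : (0:ℕ) < T := by omega
    exact_mod_cast this
  have hT1 : (1:ℝ) ≤ T := by
    have : (1:ℕ) ≤ T := by omega
    exact_mod_cast this
  have hsδ : 0 < Real.sin (δ / 2) :=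
    Real.sin_pos_of_pos_of_lt_pi (by linarith) (by linarith [Real.pi_pos])
  have hlogT : 0 ≤ Real.log T := Real.log_nonneg hT1
  set A : ℝ := ((2 * π) ^ (k + 1) * (T:ℝ))⁻¹ with hA
  have hA0 : 0 ≤ A := by positivity
  set F : (Fin (k + 1) → ℝ) → ℝ :=
    fun x => A * ((∏ i, DK T (x i)) * DK T (∑ i, x i)) with hF
  have hFnn : ∀ x, 0 ≤ F x := fun x =>
    mul_nonneg hA0 (mul_nonneg (Finset.prod_nonneg fun i _ => DK_nonneg T _) (DK_nonneg T _))
  have hFc : Continuous F := by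
    apply continuous_const.mul
    exact (continuous_finset_prod _ fun i _ =>
        (DK_cont T).comp (continuous_apply i)).mul
      ((DK_cont T).comp (continuous_finset_sum _ fun i _ => continuous_apply i))
  set S : Set (Fin (k + 1) → ℝ) :=
    (Set.pi Set.univ (fun _ : Fin (k + 1) => Set.Ioc (-π) π)) \
      {x : Fin (k + 1) → ℝ | ∀ j, |x j| ≤ δ} with hS
  set M : ℝ := (k + 1 : ℝ) * 100 ^ (k + 1) / (2 * π) ^ (k + 1) * Real.log T ^ (k + 1)
      / ((T : ℝ) * Real.sin (δ / 2)) with hM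
  have hM0 : 0 ≤ M := by
    apply div_nonneg _ (mul_nonneg hT0.le hsδ.le)
    exact mul_nonneg (by positivity) (pow_nonneg hlogT _)
  have goal2 : ∫ x in S, F x ≤ M := by
    -- pass to lintegral
    have hrepr : ∫ x in S, F x = (∫⁻ x in S, ENNReal.ofReal (F x)).toReal :=
      integral_eq_lintegral_of_nonneg_ae (Filter.Eventually.of_forall hFnn)
        hFc.aestronglyMeasurable
    rw [hrepr]
    apply ENNReal.toReal_le_of_le_ofReal hM0
    -- covering
    set B : Fin (k + 1) → Set (Fin (k + 1) → ℝ) := fun j =>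
      (Set.pi Set.univ (fun _ : Fin (k + 1) => Set.Ioc (-π) π)) ∩ {x | δ < |x j|} with hB
    have hsub : S ⊆ ⋃ j, B j := by
      rintro x ⟨hx1, hx2⟩
      simp only [Set.mem_setOf_eq, not_forall, not_le] at hx2
      obtain ⟨j, hj⟩ := hx2
      exact Set.mem_iUnion.mpr ⟨j, hx1, hj⟩
    have hBj : ∀ j, ∫⁻ x in B j, ENNReal.ofReal (F x)
        ≤ ENNReal.ofReal (A * (Real.sin (δ / 2))⁻¹)
          * (ENNReal.ofReal (100 * Real.log T)) ^ (k + 1) := by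
      intro j
      set Gj : (Fin (k + 1) → ℝ) → ENNReal := fun x =>
        (∏ i : Fin k, ENNReal.ofReal (DK T (x (j.succAbove i)))) *
          ENNReal.ofReal (DK T (∑ i, x i)) with hGj
      have hGjm : Measurable Gj := by
        apply Measurable.mul
        · exact Finset.measurable_prod _ fun i _ =>
            ENNReal.measurable_ofReal.comp ((DK_cont T).measurable.comp (measurable_pi_apply _))
        · exact ENNReal.measurable_ofReal.comp ((DK_cont T).measurable.comp
            (Finset.measurable_sum _ fun i _ => measurable_pi_apply i))
      have step1 : ∫⁻ x in B j, ENNReal.ofReal (F x)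
          ≤ ∫⁻ x in B j, ENNReal.ofReal (A * (Real.sin (δ / 2))⁻¹) * Gj x := by
        apply setLIntegral_mono (measurable_const.mul hGjm)
        intro x hx
        obtain ⟨hx1, hx2⟩ := hx
        have hxj : DK T (x j) ≤ (Real.sin (δ / 2))⁻¹ := by
          apply DK_le_inv_sin_delta T hδ0 hδπ hx2
          have := hx1 j (Set.mem_univ j)
          rw [abs_le]
          exact ⟨le_of_lt this.1, this.2⟩
        have hreal : F x ≤ (A * (Real.sin (δ / 2))⁻¹) *
            ((∏ i : Fin k, DK T (x (j.succAbove i))) * DK T (∑ i, x i)) := by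
          rw [hF]
          simp only
          rw [Fin.prod_univ_succAbove (fun i => DK T (x i)) j]
          have h1 : 0 ≤ ∏ i : Fin k, DK T (x (j.succAbove i)) :=
            Finset.prod_nonneg fun i _ => DK_nonneg T _
          have h2 : 0 ≤ DK T (∑ i, x i) := DK_nonneg T _
          calc A * ((DK T (x j) * ∏ i : Fin k, DK T (x (j.succAbove i))) * DK T (∑ i, x i))
              ≤ A * (((Real.sin (δ / 2))⁻¹ * ∏ i : Fin k, DK T (x (j.succAbove i)))
                  * DK T (∑ i, x i)) := by
                apply mul_le_mul_of_nonneg_left _ hA0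
                apply mul_le_mul_of_nonneg_right _ h2
                exact mul_le_mul_of_nonneg_right hxj h1
            _ = (A * (Real.sin (δ / 2))⁻¹) *
                ((∏ i : Fin k, DK T (x (j.succAbove i))) * DK T (∑ i, x i)) := by ring
        calc ENNReal.ofReal (F x)
            ≤ ENNReal.ofReal ((A * (Real.sin (δ / 2))⁻¹) *
                ((∏ i : Fin k, DK T (x (j.succAbove i))) * DK T (∑ i, x i))) :=
              ENNReal.ofReal_le_ofReal hreal
          _ = ENNReal.ofReal (A * (Real.sin (δ / 2))⁻¹) * Gj x := by
              rw [ENNReal.ofReal_mul (by positivity),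
                ENNReal.ofReal_mul (Finset.prod_nonneg fun i _ => DK_nonneg T _),
                ENNReal.ofReal_prod_of_nonneg (fun i _ => DK_nonneg T _)]
      have step2 : ∫⁻ x in B j, ENNReal.ofReal (A * (Real.sin (δ / 2))⁻¹) * Gj x
          ≤ ∫⁻ x in Set.pi Set.univ (fun _ : Fin (k + 1) => Set.Ioc (-π) π),
              ENNReal.ofReal (A * (Real.sin (δ / 2))⁻¹) * Gj x :=
        lintegral_mono_set Set.inter_subset_left
      have step3 : ∫⁻ x in Set.pi Set.univ (fun _ : Fin (k + 1) => Set.Ioc (-π) π),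
          ENNReal.ofReal (A * (Real.sin (δ / 2))⁻¹) * Gj x
          ≤ ENNReal.ofReal (A * (Real.sin (δ / 2))⁻¹)
            * (ENNReal.ofReal (100 * Real.log T)) ^ (k + 1) := by
        rw [lintegral_const_mul _ hGjm]
        apply mul_le_mul_right
        have hres := restrictPi (k + 1)
        calc ∫⁻ x in Set.pi Set.univ (fun _ : Fin (k + 1) => Set.Ioc (-π) π), Gj x
            = ∫⁻ x, Gj x ∂(Measure.pi fun _ : Fin (k + 1) =>
                volume.restrict (Set.Ioc (-π) π)) := by rw [← hres]
          _ ≤ (ENNReal.ofReal (100 * Real.log T)) ^ (k + 1) := by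
              rw [hGj]; exact main_G k j T hT
      exact step1.trans (step2.trans step3)
    have h100 : 0 ≤ 100 * Real.log T := mul_nonneg (by norm_num) hlogT
    calc ∫⁻ x in S, ENNReal.ofReal (F x)
        ≤ ∫⁻ x in ⋃ j, B j, ENNReal.ofReal (F x) := lintegral_mono_set hsub
      _ ≤ ∑' j, ∫⁻ x in B j, ENNReal.ofReal (F x) := lintegral_iUnion_le _ _
      _ = ∑ j, ∫⁻ x in B j, ENNReal.ofReal (F x) := tsum_fintype _
      _ ≤ ∑ _j : Fin (k + 1), ENNReal.ofReal (A * (Real.sin (δ / 2))⁻¹)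
            * (ENNReal.ofReal (100 * Real.log T)) ^ (k + 1) :=
          Finset.sum_le_sum fun j _ => hBj j
      _ = (k + 1) • (ENNReal.ofReal (A * (Real.sin (δ / 2))⁻¹)
            * (ENNReal.ofReal (100 * Real.log T)) ^ (k + 1)) := by
          rw [Finset.sum_const, Finset.card_univ, Fintype.card_fin]
      _ = ENNReal.ofReal (((k : ℝ) + 1) *
            (A * (Real.sin (δ / 2))⁻¹ * (100 * Real.log T) ^ (k + 1))) := by
          rw [← ENNReal.ofReal_pow h100,
            ← ENNReal.ofReal_mul (by positivity),
            nsmul_eq_mul,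
            show ((k + 1 : ℕ) : ENNReal) = ENNReal.ofReal ((k + 1 : ℕ) : ℝ) from
              (ENNReal.ofReal_natCast _).symm,
            ← ENNReal.ofReal_mul (by positivity)]
          congr 1
          push_cast
          ring
      _ ≤ ENNReal.ofReal M := by
          apply ENNReal.ofReal_le_ofReal
          apply le_of_eq
          rw [hM, hA]
          rw [mul_pow]
          field_simp
          ring
  calc ∫ x in S, ‖((((2 * π) ^ (k + 1) * (T : ℝ) : ℝ) : ℂ)⁻¹ *
        ∑ t ∈ Fintype.piFinset (fun _ : Fin (k + 1 + 1) => Finset.Icc 1 T),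
          Complex.exp (Complex.I *
            ∑ j : Fin (k + 1 + 1),
              (t j : ℂ) * (((Fin.snoc x (-∑ i, x i) : Fin (k + 1 + 1) → ℝ) j : ℝ) : ℂ)))‖
      = ∫ x in S, F x := by
        have hmeasS : MeasurableSet S := by
          apply MeasurableSet.diff
          · exact MeasurableSet.univ_pi fun i => measurableSet_Ioc
          · rw [Set.setOf_forall]
            exact MeasurableSet.iInter fun j =>
              measurableSet_le ((measurable_pi_apply j).abs) measurable_const
        refine setIntegral_congr_fun hmeasS fun x _ => ?_
        exact integrand_eq (k + 1) T x
    _ ≤ M := goal2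
end

section
/- For every integer n ≥ 2 and every index j ∈ {1, …, n−1} there exists a constant C > 0 (depending only on n) such that for every integer T ≥ 2, ∫_{Π^{n−1}} |x_j| |Ψ_T^{(n)}(x_1, …, x_n)| dx_1 ⋯ dx_{n−1} ≤ C T^{−1} (log T)^{n−1}, where x_n = −∑_{j=1}^{n−1} x_j. -/
open Real Finset MeasureTheory

/-! ### One-dimensional Dirichlet-type kernel -/

noncomputable def DD (T : ℕ) (u : ℝ) : ℂ := ∑ t ∈ Finset.Icc 1 T, Complex.exp (Complex.I * t * u)

noncomputable def gg (T : ℕ) (u : ℝ) : ℝ := ‖DD T u‖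

lemma gg_nonneg (T : ℕ) (u : ℝ) : 0 ≤ gg T u := norm_nonneg _

lemma DD_cont (T : ℕ) : Continuous (DD T) := by
  apply continuous_finset_sum
  intro t _
  exact Complex.continuous_exp.comp (by continuity)

lemma gg_cont (T : ℕ) : Continuous (gg T) := continuous_norm.comp (DD_cont T)

lemma gg_le_T (T : ℕ) (u : ℝ) : gg T u ≤ T := by
  calc gg T u ≤ ∑ t ∈ Finset.Icc 1 T, ‖Complex.exp (Complex.I * t * u)‖ :=
        (norm_sum_le _ _)
    _ = ∑ t ∈ Finset.Icc 1 T, 1 := by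
        apply Finset.sum_congr rfl
        intro t _
        rw [show Complex.I * t * u = (t*u : ℝ) * Complex.I by push_cast; ring]
        exact Complex.norm_exp_ofReal_mul_I _
    _ = T := by simp

lemma gg_periodic (T : ℕ) : Function.Periodic (gg T) (2*π) := by
  intro u
  unfold gg DD
  congr 1
  apply Finset.sum_congr rfl
  intro t _
  rw [show Complex.I * t * ((u + 2*π) : ℝ) = Complex.I * t * u + t * (2*π*Complex.I) by
    push_cast; ring, Complex.exp_add, Complex.exp_nat_mul_two_pi_mul_I, mul_one]

lemma exp_sub_one_lb (u : ℝ) (hu : |u| ≤ π) :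
    2*|u|/π ≤ ‖Complex.exp (u * Complex.I) - 1‖ := by
  have h1 : ‖Complex.exp (u * Complex.I) - 1‖ ^ 2 = 2 - 2 * Real.cos u := by
    rw [Complex.sq_norm, Complex.normSq_apply]
    simp only [Complex.exp_mul_I, Complex.add_re, Complex.add_im, Complex.sub_re, Complex.sub_im,
      Complex.mul_re, Complex.mul_im, Complex.I_re, Complex.I_im, Complex.one_re, Complex.one_im,
      Complex.cos_ofReal_re, Complex.cos_ofReal_im, Complex.sin_ofReal_re, Complex.sin_ofReal_im]
    nlinarith [Real.sin_sq_add_cos_sq u]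
  have h2 : Real.cos u ≤ 1 - 2/π^2 * u^2 := Real.cos_le_one_sub_mul_cos_sq hu
  have hπ := Real.pi_pos
  have h3 : (2*|u|/π)^2 ≤ ‖Complex.exp (u * Complex.I) - 1‖ ^ 2 := by
    rw [h1, div_pow, mul_pow, sq_abs, div_le_iff₀ (by positivity)]
    have key : 2/π^2 * u^2 * π^2 = 2*u^2 := by field_simp
    nlinarith [mul_le_mul_of_nonneg_right h2 (sq_nonneg π)]
  nlinarith [norm_nonneg (Complex.exp (u * Complex.I) - 1), abs_nonneg u,
    sq_nonneg (2*|u|/π - ‖Complex.exp (u * Complex.I) - 1‖)]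

lemma gg_le_inv (T : ℕ) (u : ℝ) (hu0 : u ≠ 0) (hu : |u| ≤ π) : gg T u ≤ 2*π/|u| := by
  have hπ := Real.pi_pos
  have habs : 0 < |u| := abs_pos.mpr hu0
  set z : ℂ := Complex.exp (u * Complex.I) with hz
  have hlb : 2*|u|/π ≤ ‖z - 1‖ := exp_sub_one_lb u hu
  have hzne : z ≠ 1 := by
    intro h
    rw [h] at hlb
    simp at hlb
    have : (0:ℝ) < 2 * |u| / π := by positivity
    linarith
  have hDD : DD T u = (∑ t ∈ Finset.range (T+1), z ^ t) - 1 := by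
    have h1 : Finset.range (T+1) = insert 0 (Finset.Icc 1 T) := by
      ext t
      simp [Finset.mem_range, Finset.mem_insert, Finset.mem_Icc, Nat.lt_succ_iff]
      omega
    rw [h1, Finset.sum_insert (by simp)]
    simp only [pow_zero]
    unfold DD
    have : ∀ t : ℕ, Complex.exp (Complex.I * t * u) = z ^ t := by
      intro t
      rw [hz, ← Complex.exp_nat_mul]
      congr 1
      ring
    rw [Finset.sum_congr rfl (fun t _ => this t)]
    ring
  have hgeom : ∑ t ∈ Finset.range (T+1), z ^ t = (z ^ (T+1) - 1) / (z - 1) :=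
    geom_sum_eq hzne _
  have hzabs : ‖z‖ = 1 := by
    rw [hz]; exact Complex.norm_exp_ofReal_mul_I u
  have hden : 0 < ‖z - 1‖ := lt_of_lt_of_le (by positivity) hlb
  have h2 : ‖(z ^ (T+1) - 1) / (z - 1)‖ ≤ 2 / ‖z - 1‖ := by
    rw [norm_div]
    gcongr
    calc ‖z ^ (T+1) - 1‖ ≤ ‖z ^ (T+1)‖ + ‖(1:ℂ)‖ :=
          norm_sub_le (z^(T+1)) 1
      _ ≤ 2 := by rw [norm_pow, hzabs]; norm_num
  have h3 : 2 / ‖z - 1‖ ≤ π / |u| := by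
    rw [div_le_div_iff₀ hden habs]
    calc 2 * |u| = (2*|u|/π) * π := by field_simp
      _ ≤ ‖z - 1‖ * π := by gcongr
      _ = π * ‖z-1‖ := mul_comm _ _
  have h4 : (1:ℝ) ≤ π / |u| := (one_le_div habs).mpr hu
  calc gg T u ≤ ‖(z ^ (T+1) - 1) / (z - 1)‖ + 1 := by
        unfold gg
        rw [hDD, hgeom]
        calc ‖(z ^ (T+1) - 1) / (z - 1) - 1‖
            ≤ ‖(z ^ (T+1) - 1) / (z - 1)‖ + ‖(1:ℂ)‖ := by
              exact norm_sub_le ((z ^ (T+1) - 1) / (z - 1)) 1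
          _ = _ := by rw [norm_one]
    _ ≤ π / |u| + π / |u| := add_le_add (h2.trans h3) h4
    _ = 2*π/|u| := by ring

lemma mul_gg_le (T : ℕ) (u : ℝ) (hu : |u| ≤ π) : |u| * gg T u ≤ 2*π := by
  have hπ := Real.pi_pos
  rcases eq_or_ne u 0 with rfl | hu0
  · simp
    positivity
  · have habs : 0 < |u| := abs_pos.mpr hu0
    calc |u| * gg T u ≤ |u| * (2*π/|u|) :=
          mul_le_mul_of_nonneg_left (gg_le_inv T u hu0 hu) (abs_nonneg u)
      _ = 2*π := by field_simp

lemma gg_integral_bound (T : ℕ) (hT : 2 ≤ T) :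
    ∫ u in Set.Ioc (-π) π, gg T u ≤ 2*π + 4*π*Real.log T := by
  have hπ := Real.pi_pos
  have hT0 : (0:ℝ) < T := by positivity
  have hTinv : 0 < π/T := by positivity
  have h1T : (1:ℝ) ≤ T := by exact_mod_cast Nat.one_le_iff_ne_zero.mpr (by omega)
  have hle1 : -π ≤ -(π/T) := by
    rw [neg_le_neg_iff, div_le_iff₀ hT0]
    nlinarith
  have hle2 : -(π/T) ≤ π/T := by linarith
  have hle3 : π/T ≤ π := by linarith
  have hInt : ∀ a b : ℝ, IntervalIntegrable (gg T) volume a b :=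
    fun a b => (gg_cont T).intervalIntegrable a b
  have hsplit : ∫ u in Set.Ioc (-π) π, gg T u
      = (∫ u in (-π)..(-(π/T)), gg T u) + (∫ u in (-(π/T))..(π/T), gg T u)
        + (∫ u in (π/T)..π, gg T u) := by
    rw [← intervalIntegral.integral_of_le (by linarith)]
    rw [← intervalIntegral.integral_add_adjacent_intervals (hInt (-π) (-(π/T))) (hInt _ π)]
    rw [← intervalIntegral.integral_add_adjacent_intervals (hInt (-(π/T)) (π/T)) (hInt _ π)]
    ring
  have hmid : (∫ u in (-(π/T))..(π/T), gg T u) ≤ 2*π := by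
    calc (∫ u in (-(π/T))..(π/T), gg T u) ≤ ∫ u in (-(π/T))..(π/T), (T:ℝ) :=
          intervalIntegral.integral_mono_on hle2 (hInt _ _) (intervalIntegrable_const)
            (fun u _ => gg_le_T T u)
      _ = (π/T - -(π/T)) * T := by rw [intervalIntegral.integral_const, smul_eq_mul]
      _ = 2*π := by field_simp; ring
  have hright : (∫ u in (π/T)..π, gg T u) ≤ 2*π*Real.log T := by
    have hcont : ContinuousOn (fun u : ℝ => 2*π/u) (Set.uIcc (π/T) π) := by
      apply ContinuousOn.div continuousOn_const continuousOn_id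
      intro u hu
      rw [Set.uIcc_of_le hle3] at hu
      exact ne_of_gt (lt_of_lt_of_le hTinv hu.1)
    calc (∫ u in (π/T)..π, gg T u) ≤ ∫ u in (π/T)..π, 2*π/u := by
          apply intervalIntegral.integral_mono_on hle3 (hInt _ _) hcont.intervalIntegrable
          intro u hu
          have h1 : 0 < u := lt_of_lt_of_le hTinv hu.1
          have := gg_le_inv T u (ne_of_gt h1) (by rw [abs_of_pos h1]; exact hu.2)
          rwa [abs_of_pos h1] at this
      _ = 2*π * ∫ u in (π/T)..π, 1/u := by
          rw [← intervalIntegral.integral_const_mul]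
          congr 1; ext u; ring
      _ = 2*π * Real.log (π / (π/T)) := by
          rw [integral_one_div]
          intro h
          rw [Set.uIcc_of_le hle3] at h
          linarith [h.1]
      _ = 2*π*Real.log T := by
          congr 2
          field_simp
  have hleft : (∫ u in (-π)..(-(π/T)), gg T u) ≤ 2*π*Real.log T := by
    have hcont : ContinuousOn (fun u : ℝ => -(2*π)/u) (Set.uIcc (-π) (-(π/T))) := by
      apply ContinuousOn.div continuousOn_const continuousOn_id
      intro u hu
      rw [Set.uIcc_of_le hle1] at hu
      exact ne_of_lt (lt_of_le_of_lt hu.2 (by linarith))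
    calc (∫ u in (-π)..(-(π/T)), gg T u) ≤ ∫ u in (-π)..(-(π/T)), -(2*π)/u := by
          apply intervalIntegral.integral_mono_on hle1 (hInt _ _) hcont.intervalIntegrable
          intro u hu
          have h1 : u < 0 := lt_of_le_of_lt hu.2 (by linarith)
          have := gg_le_inv T u (ne_of_lt h1) (by rw [abs_of_neg h1]; linarith [hu.1])
          rw [abs_of_neg h1] at this
          calc gg T u ≤ 2*π/(-u) := this
            _ = -(2*π)/u := by rw [div_neg, neg_div]
      _ = -(2*π) * ∫ u in (-π)..(-(π/T)), 1/u := by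
          rw [← intervalIntegral.integral_const_mul]
          congr 1; ext u; ring
      _ = -(2*π) * Real.log ((-(π/T)) / (-π)) := by
          rw [integral_one_div]
          intro h
          rw [Set.uIcc_of_le hle1] at h
          linarith [h.2]
      _ = 2*π*Real.log T := by
          rw [show (-(π/T)) / (-π) = 1/(T:ℝ) by field_simp]
          rw [Real.log_div one_ne_zero (ne_of_gt hT0), Real.log_one]
          ring
  rw [hsplit]
  linarith

/-! ### The linear involution -/

variable {m : ℕ}

noncomputable def LL (j : Fin m) : (Fin m → ℝ) →ₗ[ℝ] (Fin m → ℝ) where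
  toFun x := Function.update x j (-∑ k, x k)
  map_add' x y := by
    funext k
    by_cases h : k = j
    · subst h; simp [Function.update_self, Finset.sum_add_distrib]; ring
    · simp [Function.update_of_ne h]
  map_smul' c x := by
    funext k
    by_cases h : k = j
    · subst h; simp [Function.update_self, Finset.mul_sum]
    · simp [Function.update_of_ne h]

lemma LL_apply_ne (j : Fin m) (x : Fin m → ℝ) (k : Fin m) (h : k ≠ j) : LL j x k = x k := by
  simp [LL, Function.update_of_ne h]

lemma LL_apply_eq (j : Fin m) (x : Fin m → ℝ) : LL j x j = -∑ k, x k := by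
  simp [LL]

lemma sum_LL (j : Fin m) (x : Fin m → ℝ) : ∑ k, LL j x k = -x j := by
  have : ∑ k, LL j x k = (-∑ k, x k) + ∑ k ∈ Finset.univ.erase j, x k := by
    rw [← Finset.add_sum_erase _ _ (Finset.mem_univ j), LL_apply_eq]
    congr 1
    exact Finset.sum_congr rfl (fun k hk => LL_apply_ne j x k (Finset.ne_of_mem_erase hk))
  rw [this, ← Finset.add_sum_erase _ _ (Finset.mem_univ j)]
  ring

lemma LL_invol (j : Fin m) : Function.Involutive (LL j) := by
  intro x
  funext k
  by_cases h : k = j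
  · subst h
    rw [LL_apply_eq, sum_LL, neg_neg]
  · rw [LL_apply_ne j _ k h, LL_apply_ne j x k h]

lemma LL_det (j : Fin m) : |LinearMap.det (LL j)| = 1 := by
  have h : (LL j).comp (LL j) = LinearMap.id := by
    apply LinearMap.ext
    intro x
    exact LL_invol j x
  have h2 : LinearMap.det (LL j) * LinearMap.det (LL j) = 1 := by
    rw [← LinearMap.det_comp, h, LinearMap.det_id]
  rcases mul_self_eq_one_iff.mp h2 with h3 | h3 <;> rw [h3] <;> norm_num

lemma LL_measurable (j : Fin m) : Measurable (LL j) :=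
  (LinearMap.continuous_of_finiteDimensional (LL j)).measurable

lemma LL_measurePreserving (j : Fin m) :
    MeasurePreserving (LL j) (volume : Measure (Fin m → ℝ)) volume := by
  refine ⟨LL_measurable j, ?_⟩
  have hdet : LinearMap.det (LL j) ≠ 0 := by
    intro h
    have := LL_det j
    rw [h] at this
    norm_num at this
  rw [Real.map_linearMap_volume_pi_eq_smul_volume_pi hdet, abs_inv, LL_det j]
  simp

noncomputable def LLequiv (j : Fin m) : (Fin m → ℝ) ≃ᵐ (Fin m → ℝ) where
  toEquiv := (LL_invol j).toPerm _
  measurable_toFun := LL_measurable j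
  measurable_invFun := LL_measurable j

/-! ### Product over pi sets -/

lemma setIntegral_pi_prod (f : Fin m → ℝ → ℝ) (s : Fin m → Set ℝ)
    (hs : ∀ k, MeasurableSet (s k)) :
    ∫ x in Set.pi Set.univ s, ∏ k, f k (x k) = ∏ k, ∫ u in s k, f k u := by
  rw [← integral_indicator (MeasurableSet.univ_pi hs)]
  have h : (Set.pi Set.univ s).indicator (fun x : Fin m → ℝ => ∏ k, f k (x k))
      = fun x => ∏ k, (s k).indicator (f k) (x k) := by
    funext x
    by_cases hx : x ∈ Set.pi Set.univ s
    · rw [Set.indicator_of_mem hx]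
      exact Finset.prod_congr rfl fun k _ =>
        (Set.indicator_of_mem (hx k (Set.mem_univ k)) (f k)).symm
    · rw [Set.indicator_of_notMem hx]
      rw [Set.mem_univ_pi] at hx
      push_neg at hx
      obtain ⟨k₀, hk₀⟩ := hx
      exact (Finset.prod_eq_zero (Finset.mem_univ k₀)
        (Set.indicator_of_notMem hk₀ (f k₀))).symm
  rw [h, volume_pi]
  beta_reduce
  rw [MeasureTheory.integral_fintype_prod_eq_prod (𝕜 := ℝ)
    (fun k => (s k).indicator (f k))]
  exact Finset.prod_congr rfl fun k _ => integral_indicator (hs k)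

lemma integrableOn_of_bounded_box {g : (Fin m → ℝ) → ℝ} (hg : Continuous g)
    {s : Set (Fin m → ℝ)} (a b : Fin m → ℝ) (hsub : s ⊆ Set.Icc a b) :
    IntegrableOn g s := by
  apply IntegrableOn.mono_set _ hsub
  exact hg.continuousOn.integrableOn_compact isCompact_Icc

/-! ### Factorization -/

lemma sum_exp_factor (T : ℕ) (y : Fin (m+1) → ℝ) :
    ∑ t ∈ Fintype.piFinset (fun _ : Fin (m + 1) => Finset.Icc 1 T),
        Complex.exp (Complex.I * ∑ i : Fin (m + 1), (t i : ℂ) * ((y i : ℝ) : ℂ))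
      = ∏ i : Fin (m+1), DD T (y i) := by
  have h1 : ∀ t : Fin (m+1) → ℕ,
      Complex.exp (Complex.I * ∑ i : Fin (m + 1), (t i : ℂ) * ((y i : ℝ) : ℂ))
        = ∏ i : Fin (m+1), Complex.exp (Complex.I * (t i) * ((y i : ℝ) : ℂ)) := by
    intro t
    rw [← Complex.exp_sum]
    congr 1
    rw [Finset.mul_sum]
    exact Finset.sum_congr rfl fun i _ => by ring
  rw [Finset.sum_congr rfl fun t _ => h1 t]
  rw [← Finset.prod_univ_sum (fun _ : Fin (m+1) => Finset.Icc 1 T)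
    (fun i c => Complex.exp (Complex.I * (c : ℂ) * ((y i : ℝ) : ℂ)))]
  rfl

lemma prod_gg_snoc (T : ℕ) (x : Fin m → ℝ) (s : ℝ) :
    ∏ i : Fin (m+1), gg T ((Fin.snoc x s : Fin (m+1) → ℝ) i) = (∏ k, gg T (x k)) * gg T s := by
  rw [Fin.prod_univ_castSucc]
  simp [Fin.snoc_castSucc, Fin.snoc_last]

lemma key_identity (T : ℕ) (j : Fin m) (x : Fin m → ℝ) :
    ∏ i : Fin (m+1), gg T ((Fin.snoc x (-∑ i', x i') : Fin (m+1) → ℝ) i)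
      = gg T (x j) * ∏ k, gg T (LL j x k) := by
  rw [prod_gg_snoc]
  rw [← Finset.mul_prod_erase _ _ (Finset.mem_univ j)]
  rw [← Finset.mul_prod_erase _ (fun k => gg T (LL j x k)) (Finset.mem_univ j)]
  rw [LL_apply_eq]
  have he : ∏ k ∈ Finset.univ.erase j, gg T (LL j x k)
      = ∏ k ∈ Finset.univ.erase j, gg T (x k) :=
    Finset.prod_congr rfl fun k hk => by rw [LL_apply_ne j x k (Finset.ne_of_mem_erase hk)]
  rw [he]
  ring

lemma gg_multi_integral (T : ℕ) (m : ℕ) :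
    ∫ u in Set.Ioc (-((m+1:ℝ)*π)) ((m+1:ℝ)*π), gg T u
      = (m+1 : ℝ) * ∫ u in Set.Ioc (-π) π, gg T u := by
  have hπ := Real.pi_pos
  have hm1 : (0:ℝ) < (m+1:ℝ) := by positivity
  have hab : -((m+1:ℝ)*π) ≤ (m+1:ℝ)*π := by nlinarith
  have hInt : ∀ a b : ℝ, IntervalIntegrable (gg T) volume a b :=
    fun a b => (gg_cont T).intervalIntegrable a b
  rw [← intervalIntegral.integral_of_le hab, ← intervalIntegral.integral_of_le (by linarith)]
  have h1 := (gg_periodic T).intervalIntegral_add_zsmul_eq ((m:ℤ)+1) (-((m+1:ℝ)*π)) hInt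
  have he : -((m+1:ℝ)*π) + ((m:ℤ)+1) • (2*π) = (m+1:ℝ)*π := by
    rw [zsmul_eq_mul]
    push_cast
    ring
  rw [he] at h1
  rw [h1]
  have h2 := (gg_periodic T).intervalIntegral_add_eq (-((m+1:ℝ)*π)) (-π)
  have he2 : -π + 2*π = π := by ring
  rw [he2] at h2
  rw [h2, zsmul_eq_mul]
  push_cast
  ring

lemma LLequiv_coe {m : ℕ} (j : Fin m) : (LLequiv j : (Fin m → ℝ) → (Fin m → ℝ)) = LL j := rfl

lemma gg_def (T : ℕ) (u : ℝ) : ‖DD T u‖ = gg T u := rfl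

set_option maxHeartbeats 1000000 in
/-- For `n = m + 1 ≥ 2` and each index `j ∈ {1, …, n-1}` there is `C > 0`
(depending only on `n`) such that for every `T ≥ 2`,
`∫_{Π^{n-1}} |x_j| |Ψ_T^{(n)}(x_1, …, x_n)| dx ≤ C T⁻¹ (log T)^{n-1}`, where the multiple
Fejér kernel is evaluated at `x_n = -∑_{j<n} x_j` and `Π = (-π, π]`. -/
theorem stmt_6 (m : ℕ) (hm : 1 ≤ m) (j : Fin m) :
    ∃ C > 0, ∀ T : ℕ, 2 ≤ T →
      (∫ x in Set.pi Set.univ (fun _ : Fin m => Set.Ioc (-π) π),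
          |x j| * ‖(((2 * π) ^ m * (T : ℝ) : ℝ) : ℂ)⁻¹ *
            ∑ t ∈ Fintype.piFinset (fun _ : Fin (m + 1) => Finset.Icc 1 T),
              Complex.exp (Complex.I *
                ∑ i : Fin (m + 1),
                  (t i : ℂ) * (((Fin.snoc x (-∑ i', x i') : Fin (m + 1) → ℝ) i : ℝ) : ℂ))‖)
        ≤ C * (T : ℝ)⁻¹ * (Real.log T) ^ m := by
  have hπ := Real.pi_pos
  refine ⟨2*π*((m:ℝ)+1)*4^m, by positivity, ?_⟩
  intro T hT
  have hT0 : (0:ℝ) < T := by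
    have : (2:ℝ) ≤ T := by exact_mod_cast hT
    linarith
  have hc : (0:ℝ) < (2*π)^m * T := by positivity
  set L := Real.log T with hL
  have hL23 : (2/3 : ℝ) < Real.log 2 := by
    have := Real.log_two_gt_d9
    linarith
  have hL2 : Real.log 2 ≤ L := by
    rw [hL]
    apply Real.log_le_log (by norm_num)
    exact_mod_cast hT
  have hL0 : 0 < L := by linarith
  set box : Set (Fin m → ℝ) := Set.pi Set.univ (fun _ : Fin m => Set.Ioc (-π) π) with hbox
  have hboxm : MeasurableSet box := MeasurableSet.univ_pi (fun _ => measurableSet_Ioc)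
  set cinv : ℝ := ((2*π)^m * (T:ℝ))⁻¹ with hcinv
  have hcinv0 : 0 ≤ cinv := by positivity
  set G₀ : (Fin m → ℝ) → ℝ := fun u => ∏ k, gg T (u k) with hG₀
  have hG₀cont : Continuous G₀ := by
    apply continuous_finset_prod
    intro k _
    exact (gg_cont T).comp (continuous_apply k)
  have hG₀nonneg : ∀ u, 0 ≤ G₀ u := fun u => Finset.prod_nonneg fun k _ => gg_nonneg T _
  have hLLcont : Continuous (LL j : (Fin m → ℝ) → (Fin m → ℝ)) :=
    LinearMap.continuous_of_finiteDimensional _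
  -- Step 1 : rewrite the integrand
  have hFeq : (fun x : Fin m → ℝ => |x j| * ‖(((2 * π) ^ m * (T : ℝ) : ℝ) : ℂ)⁻¹ *
            ∑ t ∈ Fintype.piFinset (fun _ : Fin (m + 1) => Finset.Icc 1 T),
              Complex.exp (Complex.I *
                ∑ i : Fin (m + 1),
                  (t i : ℂ) * (((Fin.snoc x (-∑ i', x i') : Fin (m + 1) → ℝ) i : ℝ) : ℂ))‖)
      = fun x => cinv * ((|x j| * gg T (x j)) * G₀ (LL j x)) := by
    funext x
    rw [sum_exp_factor T (Fin.snoc x (-∑ i', x i'))]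
    rw [norm_mul, norm_inv, Complex.norm_real, Real.norm_eq_abs, abs_of_pos hc, norm_prod]
    simp only [gg_def]
    rw [key_identity T j x]
    rw [hcinv, hG₀]
    ring
  rw [hFeq, MeasureTheory.integral_const_mul]
  -- Step 2 : pointwise bound on the box
  have hsubIcc : box ⊆ Set.Icc (fun _ => -π) (fun _ => π) := by
    intro x hx
    rw [← Set.pi_univ_Icc]
    intro k _
    exact Set.Ioc_subset_Icc_self (hx k (Set.mem_univ k))
  have hint1 : IntegrableOn (fun x => (|x j| * gg T (x j)) * G₀ (LL j x)) box := by
    apply integrableOn_of_bounded_box ?_ (fun _ => -π) (fun _ => π) hsubIcc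
    exact (((continuous_apply j).abs.mul ((gg_cont T).comp (continuous_apply j))).mul
      (hG₀cont.comp hLLcont))
  have hint2 : IntegrableOn (fun x => 2*π * G₀ (LL j x)) box := by
    apply integrableOn_of_bounded_box ?_ (fun _ => -π) (fun _ => π) hsubIcc
    exact continuous_const.mul (hG₀cont.comp hLLcont)
  have hstep2 : (∫ x in box, (|x j| * gg T (x j)) * G₀ (LL j x))
      ≤ ∫ x in box, 2*π * G₀ (LL j x) := by
    apply setIntegral_mono_on hint1 hint2 hboxm
    intro x hx
    have hxj : |x j| ≤ π := by
      have h := hx j (Set.mem_univ j)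
      rw [abs_le]
      exact ⟨(h.1).le, h.2⟩
    exact mul_le_mul_of_nonneg_right (mul_gg_le T (x j) hxj) (hG₀nonneg _)
  rw [MeasureTheory.integral_const_mul] at hstep2
  -- Step 3 : change of variables
  have hemb : MeasurableEmbedding (LL j : (Fin m → ℝ) → (Fin m → ℝ)) := by
    have := (LLequiv j).measurableEmbedding
    rwa [LLequiv_coe] at this
  have hpre : (LL j : (Fin m → ℝ) → _) ⁻¹' ((LL j : (Fin m → ℝ) → _) ⁻¹' box) = box := by
    rw [← Set.preimage_comp]
    have : (LL j : (Fin m → ℝ) → _) ∘ (LL j : (Fin m → ℝ) → _) = id := by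
      funext u
      exact LL_invol j u
    rw [this, Set.preimage_id]
  have hcv : (∫ x in box, G₀ (LL j x)) = ∫ u in (LL j : (Fin m → ℝ) → _) ⁻¹' box, G₀ u := by
    conv_lhs => rw [← hpre]
    exact (LL_measurePreserving j).setIntegral_preimage_emb hemb G₀ _
  -- Step 4 : enlarge domain
  set s' : Fin m → Set ℝ := fun k =>
    if k = j then Set.Ioc (-((m+1:ℝ)*π)) ((m+1:ℝ)*π) else Set.Ioc (-π) π with hs'
  have hs'meas : ∀ k, MeasurableSet (s' k) := by
    intro k
    rw [hs']
    by_cases h : k = j <;> simp [h, measurableSet_Ioc]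
  have hsub : (LL j : (Fin m → ℝ) → _) ⁻¹' box ⊆ Set.pi Set.univ s' := by
    intro u hu
    have hu' : ∀ k, LL j u k ∈ Set.Ioc (-π) π := fun k => hu k (Set.mem_univ k)
    intro k _
    rw [hs']
    by_cases h : k = j
    · simp only [if_pos h]
      rw [h]
      have h1 : LL j u j ∈ Set.Ioc (-π) π := hu' j
      rw [LL_apply_eq] at h1
      have hsumu : |∑ k', u k'| ≤ π := by
        rw [abs_le]
        constructor <;> [linarith [h1.2]; linarith [h1.1]]
      have herase : |∑ k' ∈ Finset.univ.erase j, u k'| ≤ ((m-1 : ℕ) : ℝ) * π := by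
        calc |∑ k' ∈ Finset.univ.erase j, u k'| ≤ ∑ k' ∈ Finset.univ.erase j, |u k'| :=
              Finset.abs_sum_le_sum_abs _ _
          _ ≤ ∑ k' ∈ Finset.univ.erase j, π := by
              apply Finset.sum_le_sum
              intro k' hk'
              have := hu' k'
              rw [LL_apply_ne j u k' (Finset.ne_of_mem_erase hk')] at this
              rw [abs_le]
              exact ⟨this.1.le, this.2⟩
          _ = ((m-1 : ℕ) : ℝ) * π := by
              rw [Finset.sum_const, Finset.card_erase_of_mem (Finset.mem_univ j)]
              simp [card_univ]
      have hujeq : u j = (∑ k', u k') - ∑ k' ∈ Finset.univ.erase j, u k' := by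
        rw [← Finset.add_sum_erase _ _ (Finset.mem_univ j)]
        ring
      have hm1 : ((m-1:ℕ):ℝ) ≤ (m:ℝ) - 1 := by
        have : (1:ℕ) ≤ m := hm
        push_cast [Nat.cast_sub this]
        linarith
      have habs : |u j| ≤ (m:ℝ) * π := by
        rw [hujeq]
        calc |(∑ k', u k') - ∑ k' ∈ Finset.univ.erase j, u k'|
            ≤ |∑ k', u k'| + |∑ k' ∈ Finset.univ.erase j, u k'| := abs_sub _ _
          _ ≤ π + ((m-1:ℕ):ℝ) * π := add_le_add hsumu herase
          _ ≤ (m:ℝ) * π := by nlinarith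
      rw [abs_le] at habs
      constructor
      · have : -(((m:ℝ)+1) * π) < -((m:ℝ)*π) := by nlinarith
        linarith [habs.1]
      · nlinarith [habs.2]
    · simp only [if_neg h]
      have := hu' k
      rwa [LL_apply_ne j u k h] at this
  have hmono : (∫ u in (LL j : (Fin m → ℝ) → _) ⁻¹' box, G₀ u)
      ≤ ∫ u in Set.pi Set.univ s', G₀ u := by
    apply setIntegral_mono_set
    · apply integrableOn_of_bounded_box hG₀cont (fun _ => -((m+1:ℝ)*π)) (fun _ => (m+1:ℝ)*π)
      intro u hu
      rw [← Set.pi_univ_Icc]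
      intro k _
      have := hu k (Set.mem_univ k)
      simp only [hs'] at this
      by_cases h : k = j
      · rw [if_pos h] at this
        exact Set.Ioc_subset_Icc_self this
      · rw [if_neg h] at this
        have h2 := Set.Ioc_subset_Icc_self this
        constructor
        · have : -(((m:ℝ)+1)*π) ≤ -π := by nlinarith [Nat.cast_nonneg (α := ℝ) m]
          exact le_trans this h2.1
        · have : π ≤ ((m:ℝ)+1)*π := by nlinarith [Nat.cast_nonneg (α := ℝ) m]
          exact le_trans h2.2 this
    · exact Filter.Eventually.of_forall fun u => hG₀nonneg u
    · exact HasSubset.Subset.eventuallyLE hsub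
  -- Step 5 : product of one-dimensional integrals
  have hprod : (∫ u in Set.pi Set.univ s', G₀ u) = ∏ k, ∫ u in s' k, gg T u :=
    setIntegral_pi_prod (fun _ => gg T) s' hs'meas
  set J := ∫ u in Set.Ioc (-π) π, gg T u with hJ
  have hJ0 : 0 ≤ J := setIntegral_nonneg measurableSet_Ioc fun u _ => gg_nonneg T u
  set B : ℝ := 2*π + 4*π*L with hB
  have hJB : J ≤ B := gg_integral_bound T hT
  have hB0 : 0 ≤ B := by positivity
  have hfac : ∀ k, (∫ u in s' k, gg T u) = if k = j then ((m:ℝ)+1) * J else J := by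
    intro k
    by_cases h : k = j
    · simp only [hs', if_pos h]
      rw [hJ]
      exact gg_multi_integral T m
    · simp only [hs', if_neg h]; rfl
  have hcard : (Finset.univ.erase j).card = m - 1 := by
    rw [Finset.card_erase_of_mem (Finset.mem_univ j)]
    simp [Finset.card_univ]
  have hm1 : m - 1 + 1 = m := Nat.succ_pred_eq_of_pos hm
  have hprodbound : (∏ k, ∫ u in s' k, gg T u) ≤ ((m:ℝ)+1) * B^m := by
    rw [Finset.prod_congr rfl (fun k _ => hfac k)]
    rw [← Finset.mul_prod_erase _ _ (Finset.mem_univ j), if_pos rfl]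
    have herase : ∏ k ∈ Finset.univ.erase j, (if k = j then ((m:ℝ)+1)*J else J) = J ^ (m-1) := by
      rw [Finset.prod_congr rfl (fun k hk => if_neg (Finset.ne_of_mem_erase hk))]
      rw [Finset.prod_const, hcard]
    rw [herase]
    calc ((m:ℝ)+1)*J * J^(m-1) ≤ ((m:ℝ)+1)*B * B^(m-1) := by
          apply mul_le_mul ?_ (pow_le_pow_left₀ hJ0 hJB _) (pow_nonneg hJ0 _) (by positivity)
          apply mul_le_mul_of_nonneg_left hJB (by positivity)
      _ = ((m:ℝ)+1) * B^m := by
          rw [mul_assoc, ← pow_succ', hm1]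
  -- Step 6 : final arithmetic
  have hcinv_eq : cinv = ((2*π)^m)⁻¹ * (T:ℝ)⁻¹ := by rw [hcinv, mul_inv]
  have hBpow : B^m * ((2*π)^m)⁻¹ ≤ 4^m * L^m := by
    have h1 : B^m * ((2*π)^m)⁻¹ = (B/(2*π))^m := by rw [div_pow, div_eq_mul_inv]
    rw [h1, ← mul_pow]
    apply pow_le_pow_left₀ (by positivity) ?_
    rw [div_le_iff₀ (by positivity), hB]
    nlinarith [mul_pos hπ (by linarith : (0:ℝ) < 2*L-1)]
  calc cinv * ∫ x in box, (|x j| * gg T (x j)) * G₀ (LL j x)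
      ≤ cinv * (2*π * ∫ x in box, G₀ (LL j x)) :=
        mul_le_mul_of_nonneg_left hstep2 hcinv0
    _ = cinv * (2*π * ∫ u in (LL j : (Fin m → ℝ) → _) ⁻¹' box, G₀ u) := by rw [hcv]
    _ ≤ cinv * (2*π * ∫ u in Set.pi Set.univ s', G₀ u) :=
        mul_le_mul_of_nonneg_left (mul_le_mul_of_nonneg_left hmono (by positivity)) hcinv0
    _ = cinv * (2*π * ∏ k, ∫ u in s' k, gg T u) := by rw [hprod]
    _ ≤ cinv * (2*π * (((m:ℝ)+1) * B^m)) :=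
        mul_le_mul_of_nonneg_left (mul_le_mul_of_nonneg_left hprodbound (by positivity)) hcinv0
    _ = (2*π*((m:ℝ)+1)) * (B^m * ((2*π)^m)⁻¹) * (T:ℝ)⁻¹ := by rw [hcinv_eq]; ring
    _ ≤ (2*π*((m:ℝ)+1)) * (4^m * L^m) * (T:ℝ)⁻¹ := by
        apply mul_le_mul_of_nonneg_right ?_ (by positivity)
        exact mul_le_mul_of_nonneg_left hBpow (by positivity)
    _ = 2*π*((m:ℝ)+1)*4^m * (T:ℝ)⁻¹ * L^m := by ring
end

section
/- Let m ≥ 0, let 0 = T_0 < T_1 < ⋯ < T_{m+1} = T be integers, let B_1, …, B_{m+1} ∈ ℂ, and let ω = 2π l / T for an integer l that is not divisible by T. Then (1/T) | ∑_{j=1}^{m+1} B_j ∑_{t = T_{j−1}+1}^{T_j} exp(−i ω t) |² ≥ (1 / (T ω²)) | B_1 − B_{m+1} − ∑_{j=1}^{m} (B_j − B_{j+1}) exp(−i ω T_j) |². -/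
open Real Finset

lemma tele (B f : ℕ → ℂ) (m : ℕ) :
    ∑ j ∈ Finset.Icc 1 (m + 1), B j * (f j - f (j - 1))
      = B (m + 1) * f (m + 1) - B 1 * f 0
        + ∑ j ∈ Finset.Icc 1 m, (B j - B (j + 1)) * f j := by
  induction m with
  | zero => simp; ring
  | succ n ih =>
      rw [Finset.sum_Icc_succ_top (by omega : 1 ≤ n + 1 + 1), ih,
        Finset.sum_Icc_succ_top (by omega : 1 ≤ n + 1)]
      simp only [Nat.add_sub_cancel]
      ring


/-- With break dates `0 = Tb 0 < ⋯ < Tb (m+1) = T`, complex regime means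
`B j`, and Fourier frequency `ω = 2πl/T` with `T ∤ l`, the mean contribution to the
periodogram satisfies
`(1/T) |∑_{j=1}^{m+1} B j ∑_{t=Tb(j-1)+1}^{Tb j} exp(-iωt)|²
  ≥ (1/(Tω²)) |B 1 - B (m+1) - ∑_{j=1}^{m} (B j - B (j+1)) exp(-iω Tb j)|²`. -/
theorem stmt_9 (m T : ℕ) (Tb : ℕ → ℕ) (B : ℕ → ℂ)
    (h0 : Tb 0 = 0) (hlast : Tb (m + 1) = T)
    (hmono : ∀ j, j ≤ m → Tb j < Tb (j + 1))
    (l : ℤ) (hl : ¬ ((T : ℤ) ∣ l)) (ω : ℝ) (hω : ω = 2 * π * (l : ℝ) / (T : ℝ)) :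
    (1 / ((T : ℝ) * ω ^ 2)) *
        (norm (B 1 - B (m + 1) -
          ∑ j ∈ Finset.Icc 1 m,
            (B j - B (j + 1)) * Complex.exp (-Complex.I * (ω : ℂ) * (Tb j : ℂ)))) ^ 2
      ≤ (1 / (T : ℝ)) *
        (norm (∑ j ∈ Finset.Icc 1 (m + 1), B j *
          ∑ t ∈ Finset.Icc (Tb (j - 1) + 1) (Tb j),
            Complex.exp (-Complex.I * (t : ℂ) * (ω : ℂ)))) ^ 2 := by
  have hT : 0 < T := by
    have := hmono m le_rfl; omega
  have hT0 : (T : ℝ) ≠ 0 := by positivity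
  set z : ℂ := Complex.exp (-(ω : ℂ) * Complex.I) with hz
  -- ω * T = 2π l
  have hωT : ω * T = 2 * π * l := by rw [hω]; field_simp
  have hωTc : (ω : ℂ) * T = 2 * π * l := by exact_mod_cast congrArg (Complex.ofReal) hωT
  -- z ≠ 1
  have hzne : z ≠ 1 := by
    intro h
    rw [hz, Complex.exp_eq_one_iff] at h
    obtain ⟨n, hn⟩ := h
    have h2 : -(ω : ℂ) = n * (2 * π) :=
      mul_right_cancel₀ Complex.I_ne_zero (by linear_combination hn)
    have h3 : -ω = (n : ℝ) * (2 * π) := by exact_mod_cast h2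
    apply hl
    refine ⟨-n, ?_⟩
    have : (l : ℝ) = (T : ℝ) * (-n : ℤ) := by
      rw [hω] at h3
      push_cast
      field_simp at h3
      nlinarith [Real.pi_pos]
    exact_mod_cast this
  -- z ^ T = 1
  have hzT : z ^ T = 1 := by
    rw [hz, ← Complex.exp_nat_mul,
      show (T : ℂ) * (-(ω : ℂ) * Complex.I) = (-l : ℤ) * (2 * π * Complex.I) by
        push_cast; linear_combination (-Complex.I) * hωTc]
    exact Complex.exp_int_mul_two_pi_mul_I (-l)
  -- |z| = 1
  have hzabs : norm z = 1 := by
    rw [hz, Complex.norm_exp]; simp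
  -- exponentials as powers of z
  have hzt : ∀ t : ℕ, Complex.exp (-Complex.I * (t : ℂ) * ω) = z ^ t := fun t => by
    rw [show -Complex.I * (t : ℂ) * ω = (t : ℕ) * (-(ω : ℂ) * Complex.I) by push_cast; ring,
      Complex.exp_nat_mul]
  have hzt' : ∀ t : ℕ, Complex.exp (-Complex.I * (ω : ℂ) * (t : ℂ)) = z ^ t := fun t => by
    rw [show -Complex.I * (ω : ℂ) * (t : ℂ) = (t : ℕ) * (-(ω : ℂ) * Complex.I) by push_cast; ring,
      Complex.exp_nat_mul]
  simp only [hzt, hzt']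
  set D : ℂ := B 1 - B (m + 1) - ∑ j ∈ Finset.Icc 1 m, (B j - B (j + 1)) * z ^ (Tb j) with hD
  -- geometric sums
  have hS : (∑ j ∈ Finset.Icc 1 (m + 1), B j * ∑ t ∈ Finset.Icc (Tb (j - 1) + 1) (Tb j), z ^ t)
      = (-(z * D)) / (z - 1) := by
    have hgeo : ∀ j ∈ Finset.Icc 1 (m + 1),
        B j * ∑ t ∈ Finset.Icc (Tb (j - 1) + 1) (Tb j), z ^ t
          = B j * ((z ^ (Tb j + 1) - z ^ (Tb (j - 1) + 1)) / (z - 1)) := by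
      intro j hj
      simp only [Finset.mem_Icc] at hj
      have hle : Tb (j - 1) + 1 ≤ Tb j := by
        have hj1 : j - 1 + 1 = j := by omega
        have := hmono (j - 1) (by omega)
        rw [hj1] at this
        omega
      rw [← Finset.Ico_add_one_right_eq_Icc, geom_sum_Ico hzne (by omega)]
    rw [Finset.sum_congr rfl hgeo]
    have := tele B (fun j => z ^ (Tb j + 1)) m
    simp only [← mul_div_assoc, ← Finset.sum_div]
    rw [this, h0, hlast]
    congr 1
    simp only [pow_succ, hzT, pow_zero, one_mul, hD]
    rw [Finset.sum_congr rfl (fun x _ => (by ring :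
      (B x - B (x + 1)) * (z ^ Tb x * z) = z * ((B x - B (x + 1)) * z ^ Tb x))),
      ← Finset.mul_sum]
    ring
  rw [hS]
  -- abs computations
  have habsS : norm ((-(z * D)) / (z - 1)) = norm D / norm (z - 1) := by
    rw [norm_div, norm_neg, norm_mul, hzabs, one_mul]
  rw [habsS]
  have hzsub : norm (z - 1) ^ 2 = 2 - 2 * Real.cos ω := by
    have h1 : z = (Real.cos ω : ℂ) - (Real.sin ω : ℂ) * Complex.I := by
      rw [hz, show -(ω : ℂ) * Complex.I = ((-ω : ℝ) : ℂ) * Complex.I by push_cast; ring,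
        Complex.exp_mul_I]
      simp only [Complex.ofReal_neg, Complex.cos_neg, Complex.sin_neg,
        ← Complex.ofReal_cos, ← Complex.ofReal_sin]
      ring
    rw [Complex.sq_norm, h1, Complex.normSq_apply]
    simp [Complex.cos_ofReal_re, Complex.sin_ofReal_re]
    nlinarith [Real.sin_sq_add_cos_sq ω]
  have hzsubpos : 0 < norm (z - 1) := by
    rw [norm_pos_iff]
    exact sub_ne_zero_of_ne hzne
  have hle : norm (z - 1) ^ 2 ≤ ω ^ 2 := by
    rw [hzsub]
    nlinarith [Real.one_sub_sq_div_two_le_cos (x := ω)]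
  rw [div_pow]
  rw [show (1 / ((T : ℝ) * ω ^ 2)) * norm D ^ 2
      = norm D ^ 2 / ((T : ℝ) * ω ^ 2) by ring,
    show (1 / (T : ℝ)) * (norm D ^ 2 / norm (z - 1) ^ 2)
      = norm D ^ 2 / ((T : ℝ) * norm (z - 1) ^ 2) by ring]
  gcongr
end

section
/- Let F : ℝ → ℝ be 2π-periodic and Lebesgue integrable on [−π, π], and suppose there exist ε ∈ (0, π] and M > 0 such that F is differentiable on [−ε, ε] with |F(ω)| ≤ M and |F′(ω)| ≤ M for all |ω| ≤ ε. Then there exists a constant C > 0 such that for every integer T ≥ 2, | ∫_{−π}^{π} F(ω) · T^{−1} |∑_{t=1}^{T} exp(i t ω)|² dω − 2π F(0) | ≤ C T^{−1} log T. -/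
open Real Finset MeasureTheory

noncomputable def Sd (T : ℕ) (ω : ℝ) : ℂ :=
  ∑ t ∈ Finset.Icc 1 T, Complex.exp (Complex.I * (t : ℂ) * (ω : ℂ))

noncomputable def Kd (T : ℕ) (ω : ℝ) : ℝ := (T : ℝ)⁻¹ * (‖Sd T ω‖) ^ 2

lemma abs_term (t : ℕ) (ω : ℝ) :
    ‖Complex.exp (Complex.I * (t : ℂ) * (ω : ℂ))‖ = 1 := by
  have : Complex.I * (t : ℂ) * (ω : ℂ) = ((t * ω : ℝ) : ℂ) * Complex.I := by
    push_cast; ring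
  rw [this, Complex.norm_exp_ofReal_mul_I]

lemma abs_Sd_le (T : ℕ) (ω : ℝ) : ‖Sd T ω‖ ≤ (T : ℝ) := by
  calc ‖Sd T ω‖
      ≤ ∑ t ∈ Finset.Icc 1 T, ‖Complex.exp (Complex.I * (t : ℂ) * (ω : ℂ))‖ :=
        norm_sum_le _ _
    _ = (T : ℝ) := by simp [abs_term]

lemma Kd_nonneg (T : ℕ) (ω : ℝ) : 0 ≤ Kd T ω := by
  unfold Kd; positivity

lemma Kd_cont (T : ℕ) : Continuous (Kd T) := by
  unfold Kd Sd
  refine continuous_const.mul ((continuous_norm.comp ?_).pow 2)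
  exact continuous_finset_sum _ fun t _ =>
    Complex.continuous_exp.comp (continuous_const.mul Complex.continuous_ofReal)

lemma Kd_le (T : ℕ) (ω : ℝ) : Kd T ω ≤ (T : ℝ) := by
  unfold Kd
  rcases Nat.eq_zero_or_pos T with h | h
  · simp [h, Sd]
  · have hT : (0:ℝ) < T := by exact_mod_cast h
    have h1 : (‖Sd T ω‖)^2 ≤ (T:ℝ)^2 := by
      have := abs_Sd_le T ω
      nlinarith [norm_nonneg (Sd T ω)]
    calc (T : ℝ)⁻¹ * (‖Sd T ω‖) ^ 2 ≤ (T:ℝ)⁻¹ * (T:ℝ)^2 :=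
          mul_le_mul_of_nonneg_left h1 (by positivity)
      _ = (T : ℝ) := by field_simp [pow_two]

lemma sum_Icc_pow (z : ℂ) (T : ℕ) :
    ∑ t ∈ Finset.Icc 1 T, z ^ t = z * ∑ i ∈ Finset.range T, z ^ i := by
  induction T with
  | zero => simp
  | succ n ih =>
    rw [Finset.sum_Icc_succ_top (Nat.one_le_iff_ne_zero.mpr (Nat.succ_ne_zero n)), ih,
      Finset.sum_range_succ]
    ring

lemma abs_exp_I_sub_one (ω : ℝ) :
    ‖Complex.exp (Complex.I * (ω : ℂ)) - 1‖ = 2 * |Real.sin (ω / 2)| := by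
  have h1 : Complex.exp (Complex.I * (ω : ℂ)) = Complex.exp ((ω : ℂ) * Complex.I) := by
    ring_nf
  rw [h1, Complex.exp_mul_I]
  have : (Complex.cos ω + Complex.sin ω * Complex.I - 1) =
      Complex.mk (Real.cos ω - 1) (Real.sin ω) := by
    apply Complex.ext <;>
      simp [Complex.cos_ofReal_re, Complex.sin_ofReal_re, Complex.add_re, Complex.add_im,
        Complex.sub_re, Complex.sub_im, Complex.mul_re, Complex.mul_im]
  rw [this]
  have habs : ‖Complex.mk (Real.cos ω - 1) (Real.sin ω)‖ =
      Real.sqrt ((Real.cos ω - 1)^2 + (Real.sin ω)^2) := by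
    rw [Complex.norm_def, Complex.normSq_mk]; ring_nf
  rw [habs]
  have hc : Real.cos ω = 2 * Real.cos (ω/2)^2 - 1 := by
    have := Real.cos_two_mul (ω/2)
    rw [show 2 * (ω/2) = ω by ring] at this
    linarith
  have key : (Real.cos ω - 1)^2 + (Real.sin ω)^2 = (2 * |Real.sin (ω/2)|)^2 := by
    have h2 : (Real.cos ω - 1)^2 + (Real.sin ω)^2 = 2 - 2 * Real.cos ω := by
      nlinarith [Real.sin_sq_add_cos_sq ω]
    rw [h2, hc]
    have h3 : |Real.sin (ω/2)|^2 = Real.sin (ω/2)^2 := sq_abs _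
    nlinarith [Real.sin_sq_add_cos_sq (ω/2)]
  rw [key, Real.sqrt_sq (by positivity)]

lemma abs_Sd_le_inv_sin (T : ℕ) (ω : ℝ) (hs : Real.sin (ω / 2) ≠ 0) :
    ‖Sd T ω‖ ≤ 1 / |Real.sin (ω / 2)| := by
  set z := Complex.exp (Complex.I * (ω : ℂ)) with hz
  have hzabs : ‖z‖ = 1 := by
    rw [hz, show Complex.I * (ω : ℂ) = (ω : ℂ) * Complex.I by ring]
    exact Complex.norm_exp_ofReal_mul_I ω
  have hzsub : ‖z - 1‖ = 2 * |Real.sin (ω/2)| := abs_exp_I_sub_one ω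
  have hzne : z ≠ 1 := by
    intro h
    rw [h, sub_self, norm_zero] at hzsub
    have : |Real.sin (ω/2)| = 0 := by linarith
    exact hs (abs_eq_zero.mp this)
  have hterm : ∀ t : ℕ, Complex.exp (Complex.I * (t : ℂ) * (ω : ℂ)) = z ^ t := by
    intro t
    rw [hz, ← Complex.exp_nat_mul]
    ring_nf
  have hsum : Sd T ω = z * ((z ^ T - 1) / (z - 1)) := by
    unfold Sd
    simp only [hterm]
    rw [sum_Icc_pow, geom_sum_eq hzne T]
  rw [hsum, norm_mul, hzabs, one_mul, norm_div, hzsub]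
  have h1 : ‖z ^ T - 1‖ ≤ 2 := by
    calc ‖z ^ T - 1‖ ≤ ‖z ^ T‖ + ‖(1:ℂ)‖ :=
          norm_sub_le _ _
      _ = 2 := by rw [norm_pow, hzabs]; norm_num
  have hpos : 0 < |Real.sin (ω/2)| := abs_pos.mpr hs
  rw [div_le_div_iff₀ (by positivity) hpos]
  nlinarith

lemma sin_half_ge (ω : ℝ) (h0 : 0 < |ω|) (hπ : |ω| ≤ π) :
    |ω| / π ≤ |Real.sin (ω / 2)| := by
  rcases abs_cases ω with ⟨he, hn⟩ | ⟨he, hn⟩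
  · rw [he] at hπ ⊢
    have h0' : 0 < ω := by rw [he] at h0; exact h0
    have := Real.mul_le_sin (x := ω/2) (by linarith) (by linarith)
    rw [abs_of_nonneg (Real.sin_nonneg_of_nonneg_of_le_pi (by linarith)
      (by linarith [Real.pi_pos]))]
    calc ω / π = 2 / π * (ω / 2) := by field_simp
      _ ≤ Real.sin (ω/2) := this
  · rw [he] at hπ ⊢
    have h0' : ω < 0 := by rw [he] at h0; linarith
    have := Real.mul_le_sin (x := -ω/2) (by linarith) (by linarith)
    have hsin : Real.sin (-ω/2) = -Real.sin (ω/2) := by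
      rw [show -ω/2 = -(ω/2) by ring, Real.sin_neg]
    rw [hsin] at this
    rw [abs_of_nonpos (Real.sin_nonpos_of_nonpos_of_neg_pi_le (by linarith)
      (by linarith))]
    calc -ω / π = 2 / π * (-ω / 2) := by field_simp
      _ ≤ -Real.sin (ω/2) := this

lemma abs_Sd_le_pi_div (T : ℕ) (ω : ℝ) (h0 : 0 < |ω|) (hπ : |ω| ≤ π) :
    ‖Sd T ω‖ ≤ π / |ω| := by
  have hsin : |ω| / π ≤ |Real.sin (ω/2)| := sin_half_ge ω h0 hπ
  have hspos : (0:ℝ) < |ω| / π := by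
    have := Real.pi_pos; positivity
  have hs : Real.sin (ω/2) ≠ 0 := by
    intro h
    rw [h, abs_zero] at hsin
    linarith
  calc ‖Sd T ω‖ ≤ 1 / |Real.sin (ω/2)| := abs_Sd_le_inv_sin T ω hs
    _ ≤ 1 / (|ω| / π) := one_div_le_one_div_of_le hspos hsin
    _ = π / |ω| := by rw [one_div_div]

lemma Kd_le_sq (T : ℕ) (ω : ℝ) (h0 : 0 < |ω|) (hπ : |ω| ≤ π) :
    Kd T ω ≤ π ^ 2 / ((T : ℝ) * ω ^ 2) := by
  unfold Kd
  rcases Nat.eq_zero_or_pos T with h | h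
  · simp only [h]
    simp [Sd]
  · have hT : (0:ℝ) < T := by exact_mod_cast h
    have h1 : (‖Sd T ω‖)^2 ≤ (π / |ω|)^2 := by
      have h2 := abs_Sd_le_pi_div T ω h0 hπ
      have := norm_nonneg (Sd T ω)
      nlinarith
    have hω2 : |ω|^2 = ω^2 := sq_abs ω
    calc (T : ℝ)⁻¹ * (‖Sd T ω‖) ^ 2 ≤ (T:ℝ)⁻¹ * (π / |ω|)^2 :=
          mul_le_mul_of_nonneg_left h1 (by positivity)
      _ = π ^ 2 / ((T : ℝ) * ω ^ 2) := by
          rw [div_pow, hω2]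
          field_simp

lemma sq_abs_Sd (T : ℕ) (ω : ℝ) :
    (‖Sd T ω‖) ^ 2 =
      ∑ t ∈ Finset.Icc 1 T, ∑ s ∈ Finset.Icc 1 T, Real.cos (((t : ℝ) - s) * ω) := by
  have hprod : Sd T ω * (starRingEnd ℂ) (Sd T ω) =
      ∑ t ∈ Finset.Icc 1 T, ∑ s ∈ Finset.Icc 1 T,
        Complex.exp ((((t : ℝ) - s) * ω : ℝ) * Complex.I) := by
    unfold Sd
    rw [map_sum, Finset.sum_mul_sum]
    refine Finset.sum_congr rfl fun t _ => Finset.sum_congr rfl fun s _ => ?_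
    rw [← Complex.exp_conj, ← Complex.exp_add]
    congr 1
    simp only [map_mul, Complex.conj_I, Complex.conj_ofReal, map_natCast]
    push_cast
    ring
  calc (‖Sd T ω‖) ^ 2 = Complex.normSq (Sd T ω) := Complex.sq_norm _
    _ = (Sd T ω * (starRingEnd ℂ) (Sd T ω)).re := by rw [Complex.mul_conj, Complex.ofReal_re]
    _ = ∑ t ∈ Finset.Icc 1 T, ∑ s ∈ Finset.Icc 1 T, Real.cos (((t : ℝ) - s) * ω) := by
        rw [hprod, Complex.re_sum]
        refine Finset.sum_congr rfl fun t _ => ?_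
        rw [Complex.re_sum]
        exact Finset.sum_congr rfl fun s _ => Complex.exp_ofReal_mul_I_re _

lemma int_cos (t s : ℕ) :
    ∫ ω in (-π)..π, Real.cos (((t : ℝ) - s) * ω) = if t = s then 2 * π else 0 := by
  rcases eq_or_ne t s with h | h
  · subst h
    simp only [sub_self, zero_mul, Real.cos_zero, if_pos rfl]
    rw [intervalIntegral.integral_const]
    simp
    ring
  · rw [if_neg h]
    set c : ℝ := (t : ℝ) - s with hc
    have hcne : c ≠ 0 := by
      rw [hc, sub_ne_zero]
      exact_mod_cast fun hh => h (Nat.cast_injective hh)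
    have key : c * ∫ ω in (-π)..π, Real.cos (c * ω) = ∫ x in c * (-π)..c * π, Real.cos x :=
      intervalIntegral.mul_integral_comp_mul_left _
    have hsin : Real.sin (c * π) = 0 := by
      have : c * π = ((t : ℤ) - s : ℤ) * π := by push_cast [hc]; ring
      rw [this]
      exact Real.sin_int_mul_pi _
    have h2 : ∫ x in c * (-π)..c * π, Real.cos x = 0 := by
      rw [integral_cos]
      have : Real.sin (c * (-π)) = -Real.sin (c * π) := by
        rw [show c * (-π) = -(c * π) by ring, Real.sin_neg]
      rw [hsin, this, hsin]
      ring
    have := key.trans h2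
    rcases mul_eq_zero.mp this with h3 | h3
    · exact absurd h3 hcne
    · exact h3

lemma integral_Kd (T : ℕ) (hT : 1 ≤ T) : ∫ ω in (-π)..π, Kd T ω = 2 * π := by
  unfold Kd
  rw [intervalIntegral.integral_const_mul]
  have : (∫ ω in (-π)..π, (‖Sd T ω‖) ^ 2) = (T : ℝ) * (2 * π) := by
    have h1 : (∫ ω in (-π)..π, (‖Sd T ω‖) ^ 2) =
        ∫ ω in (-π)..π, ∑ t ∈ Finset.Icc 1 T, ∑ s ∈ Finset.Icc 1 T,
          Real.cos (((t : ℝ) - s) * ω) := by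
      refine intervalIntegral.integral_congr fun ω _ => ?_
      exact sq_abs_Sd T ω
    rw [h1]
    rw [intervalIntegral.integral_finset_sum (fun t _ => by
      apply Continuous.intervalIntegrable; fun_prop)]
    have h2 : ∀ t ∈ Finset.Icc 1 T,
        (∫ ω in (-π)..π, ∑ s ∈ Finset.Icc 1 T, Real.cos (((t : ℝ) - s) * ω)) = 2 * π := by
      intro t ht
      rw [intervalIntegral.integral_finset_sum (fun s _ => by
        apply Continuous.intervalIntegrable; fun_prop)]
      have : ∀ s ∈ Finset.Icc 1 T,
          (∫ ω in (-π)..π, Real.cos (((t : ℝ) - s) * ω)) = if t = s then 2 * π else 0 := by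
        intro s _
        exact int_cos t s
      rw [Finset.sum_congr rfl this, Finset.sum_ite_eq]
      simp [ht]
    rw [Finset.sum_congr rfl h2, Finset.sum_const, Nat.card_Icc]
    simp only [Nat.add_sub_cancel, nsmul_eq_mul]
  rw [this]
  have hT0 : (T : ℝ) ≠ 0 := by
    exact_mod_cast Nat.one_le_iff_ne_zero.mp hT
  field_simp

set_option maxHeartbeats 2000000 in
/-- Let `F` be `2π`-periodic and integrable on `[-π, π]`, bounded and with
bounded derivative on a neighborhood `[-ε, ε]` of zero. Then there is `C > 0` such that
for every `T ≥ 2`,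
`|∫_{-π}^{π} F(ω) T⁻¹ |∑_{t=1}^{T} exp(itω)|² dω - 2π F(0)| ≤ C T⁻¹ log T`. -/
theorem stmt_10 (F : ℝ → ℝ) (hper : ∀ x, F (x + 2 * π) = F x)
    (hint : IntegrableOn F (Set.Icc (-π) π))
    (ε M : ℝ) (hε : 0 < ε) (hεπ : ε ≤ π) (hM : 0 < M)
    (hdiff : ∀ ω ∈ Set.Icc (-ε) ε, DifferentiableAt ℝ F ω)
    (hbF : ∀ ω ∈ Set.Icc (-ε) ε, |F ω| ≤ M)
    (hbF' : ∀ ω ∈ Set.Icc (-ε) ε, |deriv F ω| ≤ M) :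
    ∃ C > 0, ∀ T : ℕ, 2 ≤ T →
      |(∫ ω in (-π)..π, F ω * ((T : ℝ)⁻¹ *
            ‖∑ t ∈ Finset.Icc 1 T,
              Complex.exp (Complex.I * (t : ℂ) * (ω : ℂ))‖ ^ 2))
          - 2 * π * F 0|
        ≤ C * (T : ℝ)⁻¹ * Real.log T := by
  have hπ0 : (0:ℝ) < π := Real.pi_pos
  set I₀ : ℝ := ∫ ω in (-π)..π, |F ω| with hI₀def
  have hF_ii : IntervalIntegrable F volume (-π) π := by
    rw [intervalIntegrable_iff_integrableOn_Icc_of_le (by linarith)]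
    exact hint
  have hI₀nonneg : 0 ≤ I₀ :=
    intervalIntegral.integral_nonneg (by linarith) (fun x _ => abs_nonneg _)
  have habs_ii : IntervalIntegrable (fun ω => |F ω|) volume (-π) π := hF_ii.abs
  have hlog2 : 0 < Real.log 2 := Real.log_pos (by norm_num)
  have hlogπ : 0 ≤ Real.log π := Real.log_nonneg (by nlinarith [Real.pi_gt_three])
  set C₁ : ℝ := 2*M + 2*π^2*M*Real.log π + 2*π^2*(I₀ + 2*π*M)/ε^2 with hC₁
  set C₂ : ℝ := 2*π^2*M with hC₂
  have hC₂pos : 0 < C₂ := by rw [hC₂]; positivity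
  have hC₁pos : 0 < C₁ := by
    have h1 : 0 ≤ 2*π^2*(I₀ + 2*π*M)/ε^2 := by positivity
    have h2 : 0 ≤ 2*π^2*M*Real.log π := by positivity
    rw [hC₁]; nlinarith
  refine ⟨C₁/Real.log 2 + C₂, by positivity, ?_⟩
  intro T hT
  have hT1 : 1 ≤ T := le_trans one_le_two hT
  have hTR : (2:ℝ) ≤ (T:ℝ) := by exact_mod_cast hT
  have hTpos : (0:ℝ) < T := by linarith
  have hgoal_eq : (∫ ω in (-π)..π, F ω * ((T : ℝ)⁻¹ *
      (‖∑ t ∈ Finset.Icc 1 T,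
        Complex.exp (Complex.I * (t : ℂ) * (ω : ℂ))‖) ^ 2)) =
      ∫ ω in (-π)..π, F ω * Kd T ω := rfl
  rw [hgoal_eq]
  -- integrability infrastructure
  have hKbd : ∀ x : ℝ, ‖Kd T x‖ ≤ (T:ℝ) := fun x => by
    rw [Real.norm_eq_abs, abs_of_nonneg (Kd_nonneg T x)]; exact Kd_le T x
  have hIccvol : volume (Set.Icc (-π) π) < ⊤ := measure_Icc_lt_top
  have hmulint : ∀ (G : ℝ → ℝ), IntegrableOn G (Set.Icc (-π) π) →
      IntervalIntegrable (fun ω => G ω * Kd T ω) volume (-π) π := by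
    intro G hG
    rw [intervalIntegrable_iff_integrableOn_Icc_of_le (by linarith)]
    have h2 : IntegrableOn (fun ω => Kd T ω * G ω) (Set.Icc (-π) π) :=
      Integrable.bdd_mul hG ((Kd_cont T).aestronglyMeasurable.restrict) (ae_of_all _ hKbd)
    exact h2.congr (ae_of_all _ fun x => mul_comm _ _)
  have hFK : IntervalIntegrable (fun ω => F ω * Kd T ω) volume (-π) π := hmulint F hint
  have hconst : IntegrableOn (fun _ : ℝ => F 0) (Set.Icc (-π) π) :=
    integrableOn_const hIccvol.ne
  have hFsub : IntegrableOn (fun ω => F ω - F 0) (Set.Icc (-π) π) := hint.sub hconst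
  have hgK : IntervalIntegrable (fun ω => |F ω - F 0| * Kd T ω) volume (-π) π :=
    hmulint _ hFsub.abs
  have hsubI : ∀ {f : ℝ → ℝ}, IntervalIntegrable f volume (-π) π →
      ∀ c d : ℝ, -π ≤ c → c ≤ d → d ≤ π → IntervalIntegrable f volume c d := by
    intro f hf c d h1 h2 h3
    apply hf.mono_set
    rw [Set.uIcc_of_le (by linarith : c ≤ d), Set.uIcc_of_le (by linarith : -π ≤ π)]
    exact Set.Icc_subset_Icc h1 h3
  -- step 1 : subtract the constant
  have hKint : ∫ ω in (-π)..π, Kd T ω = 2*π := integral_Kd T hT1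
  have hstep1 : (∫ ω in (-π)..π, (F ω - F 0) * Kd T ω) =
      (∫ ω in (-π)..π, F ω * Kd T ω) - 2*π*F 0 := by
    have hcongr : Set.EqOn (fun ω => (F ω - F 0) * Kd T ω)
        (fun ω => F ω * Kd T ω - F 0 * Kd T ω) (Set.uIcc (-π) π) := fun ω _ => by ring
    rw [intervalIntegral.integral_congr hcongr,
      intervalIntegral.integral_sub hFK (hmulint (fun _ => F 0) hconst)]
    have : (∫ ω in (-π)..π, F 0 * Kd T ω) = F 0 * (2*π) := by
      rw [intervalIntegral.integral_const_mul, hKint]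
    rw [this]; ring
  -- step 2 : bound by the absolute integrand
  set g : ℝ → ℝ := fun ω => |F ω - F 0| * Kd T ω with hgdef
  have hstep2 : |∫ ω in (-π)..π, (F ω - F 0) * Kd T ω| ≤ ∫ ω in (-π)..π, g ω := by
    calc |∫ ω in (-π)..π, (F ω - F 0) * Kd T ω|
        ≤ ∫ ω in (-π)..π, |(F ω - F 0) * Kd T ω| :=
          intervalIntegral.abs_integral_le_integral_abs (by linarith)
      _ = ∫ ω in (-π)..π, g ω := intervalIntegral.integral_congr fun ω _ => by
          simp only [hgdef, abs_mul, abs_of_nonneg (Kd_nonneg T ω)]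
  -- the split point
  set a : ℝ := min ε (1/(T:ℝ)) with hadef
  have ha_pos : 0 < a := lt_min hε (by positivity)
  have ha_ε : a ≤ ε := min_le_left _ _
  have ha_T : a ≤ 1/(T:ℝ) := min_le_right _ _
  have ha_π : a ≤ π := le_trans ha_ε hεπ
  have hεa : ε ≤ π * (T:ℝ) * a := by
    rcases le_total ε (1/(T:ℝ)) with h | h
    · rw [hadef, min_eq_left h]
      have h1 : (1:ℝ) ≤ π * T := by nlinarith [Real.pi_gt_three]
      nlinarith [mul_le_mul_of_nonneg_right h1 hε.le]
    · rw [hadef, min_eq_right h]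
      have heq : π * (T:ℝ) * (1/(T:ℝ)) = π := by field_simp
      rw [heq]; linarith
  -- mean value theorem bound near zero
  have hMVT : ∀ x ∈ Set.Icc (-ε) ε, |F x - F 0| ≤ M * |x| := by
    intro x hx
    have h0mem : (0:ℝ) ∈ Set.Icc (-ε) ε := ⟨by linarith, by linarith⟩
    have := (convex_Icc (-ε) ε).norm_image_sub_le_of_norm_deriv_le hdiff
      (fun y hy => by rw [Real.norm_eq_abs]; exact hbF' y hy) h0mem hx
    simpa [Real.norm_eq_abs, sub_zero] using this
  -- splitting the integral
  have i1 := hsubI hgK (-π) (-ε) le_rfl (by linarith) (by linarith)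
  have i2 := hsubI hgK (-ε) (-a) (by linarith) (by linarith) (by linarith)
  have i3 := hsubI hgK (-a) a (by linarith) (by linarith) (by linarith)
  have i4 := hsubI hgK a ε (by linarith) ha_ε (by linarith)
  have i5 := hsubI hgK ε π (by linarith) hεπ le_rfl
  have h45 : (∫ ω in a..ε, g ω) + (∫ ω in ε..π, g ω) = ∫ ω in a..π, g ω :=
    intervalIntegral.integral_add_adjacent_intervals i4 i5
  have h345 : (∫ ω in (-a)..a, g ω) + (∫ ω in a..π, g ω) = ∫ ω in (-a)..π, g ω :=
    intervalIntegral.integral_add_adjacent_intervals i3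
      (hsubI hgK a π (by linarith) (by linarith) le_rfl)
  have h2345 : (∫ ω in (-ε)..(-a), g ω) + (∫ ω in (-a)..π, g ω) = ∫ ω in (-ε)..π, g ω :=
    intervalIntegral.integral_add_adjacent_intervals i2
      (hsubI hgK (-a) π (by linarith) (by linarith) le_rfl)
  have h12345 : (∫ ω in (-π)..(-ε), g ω) + (∫ ω in (-ε)..π, g ω) = ∫ ω in (-π)..π, g ω :=
    intervalIntegral.integral_add_adjacent_intervals i1
      (hsubI hgK (-ε) π (by linarith) (by linarith) le_rfl)
  -- bound on the middle piece
  have hmid : (∫ ω in (-a)..a, g ω) ≤ 2*M/(T:ℝ) := by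
    have hbound : ∀ x ∈ Set.uIoc (-a) a, ‖g x‖ ≤ M := by
      intro x hx
      rw [Set.uIoc_of_le (by linarith : -a ≤ a)] at hx
      have hx1 : |x| ≤ a := abs_le.mpr ⟨le_of_lt hx.1, hx.2⟩
      have hx2 := abs_le.mp hx1
      have hxε : x ∈ Set.Icc (-ε) ε := ⟨by linarith, by linarith⟩
      have hF1 : |F x - F 0| ≤ M * |x| := hMVT x hxε
      have hnorm : ‖g x‖ = g x := by
        rw [Real.norm_eq_abs, abs_of_nonneg (mul_nonneg (abs_nonneg _) (Kd_nonneg T x))]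
      rw [hnorm]
      have hc1 : g x ≤ (M * |x|) * (T:ℝ) :=
        mul_le_mul hF1 (Kd_le T x) (Kd_nonneg T x) (by positivity)
      have hc2 : (M * |x|) * (T:ℝ) ≤ M := by
        have h3 : |x| * (T:ℝ) ≤ 1 := by
          calc |x| * (T:ℝ) ≤ (1/(T:ℝ)) * (T:ℝ) :=
                mul_le_mul_of_nonneg_right (le_trans hx1 ha_T) hTpos.le
            _ = 1 := by field_simp
        calc (M * |x|) * (T:ℝ) = M * (|x| * (T:ℝ)) := by ring
          _ ≤ M * 1 := mul_le_mul_of_nonneg_left h3 hM.le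
          _ = M := mul_one M
      linarith
    have hnorm := intervalIntegral.norm_integral_le_of_norm_le_const hbound
    have h2 : |a - (-a)| = 2*a := by rw [abs_of_nonneg (by linarith)]; ring
    calc (∫ ω in (-a)..a, g ω) ≤ |∫ ω in (-a)..a, g ω| := le_abs_self _
      _ ≤ M * |a - (-a)| := by simpa [Real.norm_eq_abs] using hnorm
      _ = M * (2*a) := by rw [h2]
      _ ≤ 2*M/(T:ℝ) := by
          rw [le_div_iff₀ hTpos]
          have h4 : a * (T:ℝ) ≤ 1 := by
            calc a * (T:ℝ) ≤ (1/(T:ℝ)) * (T:ℝ) :=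
                  mul_le_mul_of_nonneg_right ha_T hTpos.le
              _ = 1 := by field_simp
          calc M * (2*a) * (T:ℝ) = 2*M*(a*(T:ℝ)) := by ring
            _ ≤ 2*M*1 := mul_le_mul_of_nonneg_left h4 (by positivity)
            _ = 2*M := mul_one _
  -- bound on [a, ε]
  have hKsq : ∀ x : ℝ, 0 < |x| → |x| ≤ π → Kd T x ≤ π^2/((T:ℝ)*x^2) := fun x h1 h2 =>
    Kd_le_sq T x h1 h2
  have hb4 : (∫ ω in a..ε, g ω) ≤ M*π^2/(T:ℝ) * Real.log (ε/a) := by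
    have hpt : ∀ x ∈ Set.Icc a ε, g x ≤ M*π^2/(T:ℝ) * (1/x) := by
      intro x hx
      have hx0 : 0 < x := lt_of_lt_of_le ha_pos hx.1
      have hxa : |x| = x := abs_of_pos hx0
      have hxε : x ∈ Set.Icc (-ε) ε := ⟨by linarith [hx.1], hx.2⟩
      have hF1 : |F x - F 0| ≤ M * x := by
        have := hMVT x hxε; rwa [hxa] at this
      have hK1 : Kd T x ≤ π^2/((T:ℝ)*x^2) := hKsq x (by rw [hxa]; exact hx0)
        (by rw [hxa]; linarith [hx.2])
      have hxne : x ≠ 0 := ne_of_gt hx0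
      have hc1 : g x ≤ (M * x) * (π^2/((T:ℝ)*x^2)) :=
        mul_le_mul hF1 hK1 (Kd_nonneg T x) (mul_nonneg hM.le hx0.le)
      have heq : (M * x) * (π^2/((T:ℝ)*x^2)) = M*π^2/(T:ℝ) * (1/x) := by
        field_simp
      rw [heq] at hc1
      exact hc1
    have hhi : IntervalIntegrable (fun x => M*π^2/(T:ℝ) * (1/x)) volume a ε := by
      apply IntervalIntegrable.const_mul
      apply intervalIntegral.intervalIntegrable_one_div
      · intro x hx
        rw [Set.uIcc_of_le ha_ε] at hx
        exact ne_of_gt (lt_of_lt_of_le ha_pos hx.1)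
      · exact continuousOn_id
    have := intervalIntegral.integral_mono_on ha_ε i4 hhi hpt
    calc (∫ ω in a..ε, g ω) ≤ ∫ x in a..ε, M*π^2/(T:ℝ) * (1/x) := this
      _ = M*π^2/(T:ℝ) * Real.log (ε/a) := by
          rw [intervalIntegral.integral_const_mul, integral_one_div]
          rw [Set.uIcc_of_le ha_ε]
          intro hmem
          exact absurd hmem.1 (not_le.mpr ha_pos)
  -- bound on [-ε, -a]
  have hb2 : (∫ ω in (-ε)..(-a), g ω) ≤ M*π^2/(T:ℝ) * Real.log (ε/a) := by
    have hpt : ∀ x ∈ Set.Icc (-ε) (-a), g x ≤ M*π^2/(T:ℝ) * (-(1/x)) := by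
      intro x hx
      have hx0 : x < 0 := lt_of_le_of_lt hx.2 (by linarith)
      have hxa : |x| = -x := abs_of_neg hx0
      have hxε : x ∈ Set.Icc (-ε) ε := ⟨hx.1, by linarith [hx.2]⟩
      have hF1 : |F x - F 0| ≤ M * (-x) := by
        have := hMVT x hxε; rwa [hxa] at this
      have hK1 : Kd T x ≤ π^2/((T:ℝ)*x^2) := hKsq x (by rw [hxa]; linarith [hx.2])
        (by rw [hxa]; linarith [hx.1])
      have hxne : x ≠ 0 := ne_of_lt hx0
      have hc1 : g x ≤ (M * (-x)) * (π^2/((T:ℝ)*x^2)) :=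
        mul_le_mul hF1 hK1 (Kd_nonneg T x) (mul_nonneg hM.le (by linarith))
      have heq : (M * (-x)) * (π^2/((T:ℝ)*x^2)) = M*π^2/(T:ℝ) * (-(1/x)) := by
        field_simp
      rw [heq] at hc1
      exact hc1
    have hhi : IntervalIntegrable (fun x => M*π^2/(T:ℝ) * (-(1/x))) volume (-ε) (-a) := by
      apply IntervalIntegrable.const_mul
      apply IntervalIntegrable.neg
      apply intervalIntegral.intervalIntegrable_one_div
      · intro x hx
        rw [Set.uIcc_of_le (by linarith : -ε ≤ -a)] at hx
        exact ne_of_lt (lt_of_le_of_lt hx.2 (by linarith))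
      · exact continuousOn_id
    have hm := intervalIntegral.integral_mono_on (by linarith : -ε ≤ -a) i2 hhi hpt
    calc (∫ ω in (-ε)..(-a), g ω) ≤ ∫ x in (-ε)..(-a), M*π^2/(T:ℝ) * (-(1/x)) := hm
      _ = M*π^2/(T:ℝ) * Real.log (ε/a) := by
          have e1 : (∫ x in (-ε)..(-a), M*π^2/(T:ℝ) * (-(1/x))) =
              M*π^2/(T:ℝ) * ∫ x in (-ε)..(-a), -(1/x) := by
            rw [intervalIntegral.integral_const_mul]
          rw [e1, intervalIntegral.integral_neg, integral_one_div]
          · have : (-a)/(-ε) = a/ε := by field_simp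
            rw [this, ← Real.log_inv]
            congr 1
            field_simp
          · rw [Set.uIcc_of_le (by linarith : -ε ≤ -a)]
            intro hmem
            exact absurd hmem.2 (not_le.mpr (by linarith))
  -- bound on [ε, π]
  have htail : ∀ x : ℝ, ε ≤ |x| → |x| ≤ π → Kd T x ≤ π^2/((T:ℝ)*ε^2) := by
    intro x h1 h2
    have h3 : Kd T x ≤ π^2/((T:ℝ)*x^2) := hKsq x (lt_of_lt_of_le hε h1) h2
    have h4 : ε^2 ≤ x^2 := by
      rw [← sq_abs x]
      exact pow_le_pow_left₀ hε.le h1 2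
    calc Kd T x ≤ π^2/((T:ℝ)*x^2) := h3
      _ ≤ π^2/((T:ℝ)*ε^2) := by
          apply div_le_div_of_nonneg_left (by positivity) (by positivity)
          nlinarith
  have hF0M : |F 0| ≤ M := hbF 0 ⟨by linarith, by linarith⟩
  have habs_sub_ii : IntervalIntegrable (fun ω => |F ω| + M) volume (-π) π :=
    habs_ii.add (intervalIntegrable_const)
  have htailint : ∀ c d : ℝ, -π ≤ c → c ≤ d → d ≤ π →
      (∫ x in c..d, |F x|) ≤ I₀ := by
    intro c d h1 h2 h3
    rw [hI₀def]
    apply intervalIntegral.integral_mono_interval h1 h2 h3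
    · exact ae_of_all _ fun x => abs_nonneg _
    · exact habs_ii
  have htailbound : ∀ c d : ℝ, -π ≤ c → c ≤ d → d ≤ π → (∀ x ∈ Set.Icc c d, ε ≤ |x|) →
      (∫ ω in c..d, g ω) ≤ π^2/((T:ℝ)*ε^2) * (I₀ + 2*π*M) := by
    intro c d h1 h2 h3 hfar
    have hpt : ∀ x ∈ Set.Icc c d, g x ≤ (|F x| + M) * (π^2/((T:ℝ)*ε^2)) := by
      intro x hx
      have hx1 : ε ≤ |x| := hfar x hx
      have hx2 : |x| ≤ π := by
        rcases abs_cases x with ⟨he, _⟩ | ⟨he, _⟩ <;> rw [he] <;>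
          [linarith [hx.2]; linarith [hx.1]]
      have hF1 : |F x - F 0| ≤ |F x| + M := by
        calc |F x - F 0| ≤ |F x| + |F 0| := abs_sub _ _
          _ ≤ |F x| + M := by linarith
      exact mul_le_mul hF1 (htail x hx1 hx2) (Kd_nonneg T x) (by positivity)
    have hhi : IntervalIntegrable (fun x => (|F x| + M) * (π^2/((T:ℝ)*ε^2))) volume c d := by
      apply IntervalIntegrable.mul_const
      exact hsubI habs_sub_ii c d h1 h2 h3
    have hm := intervalIntegral.integral_mono_on h2 (hsubI hgK c d h1 h2 h3) hhi hpt
    have heval : (∫ x in c..d, (|F x| + M) * (π^2/((T:ℝ)*ε^2))) =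
        ((∫ x in c..d, |F x|) + (d - c) * M) * (π^2/((T:ℝ)*ε^2)) := by
      rw [intervalIntegral.integral_mul_const,
        intervalIntegral.integral_add (hsubI habs_ii c d h1 h2 h3) intervalIntegrable_const,
        intervalIntegral.integral_const, smul_eq_mul]
    have hfin : ((∫ x in c..d, |F x|) + (d - c) * M) * (π^2/((T:ℝ)*ε^2)) ≤
        (I₀ + 2*π*M) * (π^2/((T:ℝ)*ε^2)) := by
      apply mul_le_mul_of_nonneg_right _ (by positivity)
      have := htailint c d h1 h2 h3
      nlinarith [hM.le]
    calc (∫ ω in c..d, g ω) ≤ _ := hm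
      _ = ((∫ x in c..d, |F x|) + (d - c) * M) * (π^2/((T:ℝ)*ε^2)) := heval
      _ ≤ (I₀ + 2*π*M) * (π^2/((T:ℝ)*ε^2)) := hfin
      _ = π^2/((T:ℝ)*ε^2) * (I₀ + 2*π*M) := mul_comm _ _
  have hb5 : (∫ ω in ε..π, g ω) ≤ π^2/((T:ℝ)*ε^2) * (I₀ + 2*π*M) := by
    apply htailbound ε π (by linarith) hεπ le_rfl
    intro x hx
    rw [abs_of_pos (lt_of_lt_of_le hε hx.1)]
    exact hx.1
  have hb1 : (∫ ω in (-π)..(-ε), g ω) ≤ π^2/((T:ℝ)*ε^2) * (I₀ + 2*π*M) := by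
    apply htailbound (-π) (-ε) le_rfl (by linarith) (by linarith)
    intro x hx
    rw [abs_of_neg (lt_of_le_of_lt hx.2 (by linarith))]
    linarith [hx.2]
  -- log bound
  have hL : Real.log (ε/a) ≤ Real.log π + Real.log (T:ℝ) := by
    have h1 : ε/a ≤ π * (T:ℝ) := by
      rw [div_le_iff₀ ha_pos]
      nlinarith
    calc Real.log (ε/a) ≤ Real.log (π * (T:ℝ)) :=
        Real.log_le_log (by positivity) h1
      _ = Real.log π + Real.log (T:ℝ) := Real.log_mul (ne_of_gt hπ0) (ne_of_gt hTpos)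
  have hlogT : Real.log 2 ≤ Real.log (T:ℝ) := Real.log_le_log (by norm_num) hTR
  -- assemble
  have hMπT : 0 ≤ M*π^2/(T:ℝ) := by positivity
  have htotal : (∫ ω in (-π)..π, g ω) ≤ (C₁ + C₂ * Real.log (T:ℝ))/(T:ℝ) := by
    have hb24 : (∫ ω in (-ε)..(-a), g ω) + (∫ ω in a..ε, g ω) ≤
        2 * (M*π^2/(T:ℝ)) * (Real.log π + Real.log (T:ℝ)) := by
      have e1 : M*π^2/(T:ℝ) * Real.log (ε/a) ≤ M*π^2/(T:ℝ) *
          (Real.log π + Real.log (T:ℝ)) := mul_le_mul_of_nonneg_left hL hMπT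
      linarith
    have hsum : (∫ ω in (-π)..π, g ω) =
        (∫ ω in (-π)..(-ε), g ω) + (∫ ω in (-ε)..(-a), g ω) + (∫ ω in (-a)..a, g ω) +
        (∫ ω in a..ε, g ω) + (∫ ω in ε..π, g ω) := by
      rw [← h12345, ← h2345, ← h345, ← h45]; ring
    rw [hsum]
    have hrhs : (C₁ + C₂ * Real.log (T:ℝ))/(T:ℝ) =
        2*M/(T:ℝ) + 2*(M*π^2/(T:ℝ))*(Real.log π + Real.log (T:ℝ)) +
        2*(π^2/((T:ℝ)*ε^2)*(I₀ + 2*π*M)) := by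
      rw [hC₁, hC₂]
      field_simp
      ring
    rw [hrhs]
    linarith
  have hfinal : (C₁ + C₂ * Real.log (T:ℝ))/(T:ℝ) ≤
      (C₁/Real.log 2 + C₂) * (T:ℝ)⁻¹ * Real.log (T:ℝ) := by
    have h1 : C₁ ≤ C₁/Real.log 2 * Real.log (T:ℝ) := by
      rw [div_mul_eq_mul_div, le_div_iff₀ hlog2]
      nlinarith
    have h2 : C₁ + C₂ * Real.log (T:ℝ) ≤ (C₁/Real.log 2 + C₂) * Real.log (T:ℝ) := by
      nlinarith
    calc (C₁ + C₂ * Real.log (T:ℝ))/(T:ℝ) ≤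
        ((C₁/Real.log 2 + C₂) * Real.log (T:ℝ))/(T:ℝ) := by
          gcongr
      _ = (C₁/Real.log 2 + C₂) * (T:ℝ)⁻¹ * Real.log (T:ℝ) := by
          field_simp
  calc |(∫ ω in (-π)..π, F ω * Kd T ω) - 2*π*F 0|
      = |∫ ω in (-π)..π, (F ω - F 0) * Kd T ω| := by rw [hstep1]
    _ ≤ ∫ ω in (-π)..π, g ω := hstep2
    _ ≤ (C₁ + C₂ * Real.log (T:ℝ))/(T:ℝ) := htotal
    _ ≤ (C₁/Real.log 2 + C₂) * (T:ℝ)⁻¹ * Real.log (T:ℝ) := hfinal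
end

section
/- For all complex numbers a and b, |exp(a) − 1 − b| ≤ exp(max(|a|, |b|)) · (|a − b| + |b|²/2). -/
open scoped Nat

/-- MVT bound: `|exp a - exp b| ≤ exp (max |a| |b|) * |a - b|`. -/
lemma exp_lip (a b : ℂ) :
    ‖Complex.exp a - Complex.exp b‖
      ≤ Real.exp (max (‖a‖) (‖b‖)) * ‖a - b‖ := by
  set M := max (‖a‖) (‖b‖) with hM
  have hs : Convex ℝ (Metric.closedBall (0 : ℂ) M) := convex_closedBall _ _
  have h := hs.norm_image_sub_le_of_norm_deriv_le (f := Complex.exp)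
    (C := Real.exp M)
    (fun x _ => Complex.differentiable_exp x)
    (fun x hx => by
      rw [Complex.deriv_exp]
      have hx' : ‖x‖ ≤ M := by
        simpa using Metric.mem_closedBall.mp hx
      calc ‖Complex.exp x‖ = Real.exp x.re := Complex.norm_exp x
        _ ≤ Real.exp M := Real.exp_le_exp.mpr ((Complex.re_le_norm x).trans hx'))
    (x := b) (y := a)
    (Metric.mem_closedBall.mpr (by
      rw [dist_zero_right]; exact le_max_right _ _))
    (Metric.mem_closedBall.mpr (by
      rw [dist_zero_right]; exact le_max_left _ _))
  simpa using h

/-- Series bound: `|exp b - 1 - b| ≤ |b|^2/2 * exp |b|`. -/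
lemma exp_quad (b : ℂ) :
    ‖Complex.exp b - 1 - b‖
      ≤ ‖b‖ ^ 2 / 2 * Real.exp (‖b‖) := by
  have hsum : Summable (fun n : ℕ => b ^ n / n !) :=
    NormedSpace.expSeries_div_summable b
  have hexp : Complex.exp b = ∑' n : ℕ, b ^ n / n ! := by
    rw [Complex.exp_eq_exp_ℂ, NormedSpace.exp_eq_tsum_div]
  have htail : Complex.exp b - 1 - b = ∑' n : ℕ, b ^ (n + 2) / (n + 2)! := by
    have h2 := Summable.sum_add_tsum_nat_add (f := fun n : ℕ => b ^ n / n !) 2 hsum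
    rw [hexp, ← h2]
    simp [Finset.sum_range_succ]
    ring
  have hRsum : Summable (fun n : ℕ => ‖b‖ ^ n / n !) :=
    Real.summable_pow_div_factorial (‖b‖)
  have hRsum2 : Summable (fun n : ℕ => ‖b‖ ^ 2 / 2 * (‖b‖ ^ n / n !)) :=
    hRsum.mul_left _
  have hbound : ∀ n : ℕ, ‖b ^ (n + 2) / ((n + 2)! : ℂ)‖
      ≤ ‖b‖ ^ 2 / 2 * (‖b‖ ^ n / n !) := by
    intro n
    have hfac : (2 * n ! : ℝ) ≤ ((n + 2)! : ℝ) := by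
      have : 2 * n ! ≤ (n + 2)! := by
        calc 2 * n ! ≤ (n + 2) * n ! := by
              exact Nat.mul_le_mul_right _ (by omega)
          _ ≤ (n + 2) * ((n + 1) * n !) := by
              exact Nat.mul_le_mul_left _ (Nat.le_mul_of_pos_left _ (by omega))
          _ = (n + 2)! := by
              rw [Nat.factorial_succ, Nat.factorial_succ]
      exact_mod_cast this
    have h1 : ‖b ^ (n + 2) / ((n + 2)! : ℂ)‖
        = ‖b‖ ^ (n + 2) / ((n + 2)! : ℝ) := by
      simp [map_div₀, map_pow, Complex.norm_natCast]
    rw [h1]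
    have h2 : ‖b‖ ^ (n + 2) / ((n + 2)! : ℝ)
        ≤ ‖b‖ ^ (n + 2) / (2 * n !) := by
      apply div_le_div_of_nonneg_left (by positivity) (by positivity) hfac
    refine h2.trans_eq ?_
    rw [pow_add]
    ring
  have hnsum : Summable (fun n : ℕ => ‖b ^ (n + 2) / ((n + 2)! : ℂ)‖) :=
    Summable.of_nonneg_of_le (fun n => norm_nonneg _) hbound hRsum2
  have hnorm : ‖∑' n : ℕ, b ^ (n + 2) / ((n + 2)! : ℂ)‖
      ≤ ∑' n : ℕ, ‖b‖ ^ 2 / 2 * (‖b‖ ^ n / n !) :=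
    (norm_tsum_le_tsum_norm hnsum).trans (Summable.tsum_le_tsum hbound hnsum hRsum2)
  have hRexp : (∑' n : ℕ, ‖b‖ ^ n / n !) = Real.exp (‖b‖) := by
    rw [Real.exp_eq_exp_ℝ, NormedSpace.exp_eq_tsum_div]
  calc ‖Complex.exp b - 1 - b‖
      = ‖∑' n : ℕ, b ^ (n + 2) / ((n + 2)! : ℂ)‖ := by rw [htail]
    _ ≤ ∑' n : ℕ, ‖b‖ ^ 2 / 2 * (‖b‖ ^ n / n !) := hnorm
    _ = ‖b‖ ^ 2 / 2 * Real.exp (‖b‖) := by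
        rw [tsum_mul_left, hRexp]

/-- For all complex numbers `a` and `b`,
`|exp(a) - 1 - b| ≤ exp(max(|a|, |b|)) (|a - b| + |b|²/2)`. -/
theorem stmt_15 (a b : ℂ) :
    ‖Complex.exp a - 1 - b‖
      ≤ Real.exp (max (‖a‖) (‖b‖)) *
          (‖a - b‖ + ‖b‖ ^ 2 / 2) := by
  have key : Complex.exp a - 1 - b = (Complex.exp a - Complex.exp b) + (Complex.exp b - 1 - b) := by
    ring
  have h1 := exp_lip a b
  have h2 := exp_quad b
  have hle : Real.exp (‖b‖) ≤ Real.exp (max (‖a‖) (‖b‖)) :=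
    Real.exp_le_exp.mpr (le_max_right _ _)
  have h2' : ‖Complex.exp b - 1 - b‖
      ≤ ‖b‖ ^ 2 / 2 * Real.exp (max (‖a‖) (‖b‖)) :=
    h2.trans (mul_le_mul_of_nonneg_left hle (by positivity))
  calc ‖Complex.exp a - 1 - b‖
      ≤ ‖Complex.exp a - Complex.exp b‖ + ‖Complex.exp b - 1 - b‖ := by
        rw [key]; exact norm_add_le _ _
    _ ≤ Real.exp (max (‖a‖) (‖b‖)) * ‖a - b‖
        + ‖b‖ ^ 2 / 2 * Real.exp (max (‖a‖) (‖b‖)) :=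
        add_le_add h1 h2'
    _ = Real.exp (max (‖a‖) (‖b‖)) *
          (‖a - b‖ + ‖b‖ ^ 2 / 2) := by ring
end
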